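/- arXiv:2203.11416 — 3 statements merged into one kernel-verified Lean document; each statement's English description precedes it below -/
import Mathlib

section
/- For natural numbers n ≥ k, the number of permutations of length n avoiding 231, 312, and 321 that have exactly k inversions is the binomial coefficient C(n-k, k). -/
open Finset MvPolynomial
open scoped Classical

/-- `π` contains the pattern given by the list `p` (one-line notation). -/
def ContainsPat {n : ℕ} (π : Equiv.Perm (Fin n)) (p : List ℕ) : Prop :=
  ∃ f : Fin p.length → Fin n, StrictMono f ∧
    ∀ i j : Fin p.length, p.get i < p.get j ↔ π (f i) < π (f j)

/-- `π` avoids every pattern in the list `S`. -/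
def AvoidsAll {n : ℕ} (π : Equiv.Perm (Fin n)) (S : List (List ℕ)) : Prop :=
  ∀ p ∈ S, ¬ ContainsPat π p

/-- Fibonacci numbers with the convention `F 0 = F 1 = 1`. -/
def fib' : ℕ → ℕ
  | 0 => 1
  | 1 => 1
  | n + 2 => fib' (n + 1) + fib' n

/-- number of inversions -/
def invNum {n : ℕ} (π : Equiv.Perm (Fin n)) : ℕ :=
  (Finset.univ.filter (fun p : Fin n × Fin n => p.1 < p.2 ∧ π p.2 < π p.1)).card

/-- The last `k` entries of `π` contain pattern `p`. -/
def SegContainsPat {n : ℕ} (π : Equiv.Perm (Fin n)) (k : ℕ) (p : List ℕ) : Prop :=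
  ∃ f : Fin p.length → Fin n, StrictMono f ∧ (∀ i, n - k ≤ ((f i : Fin n) : ℕ)) ∧
    ∀ i j : Fin p.length, p.get i < p.get j ↔ π (f i) < π (f j)

/-- The last `k` entries of `π` are the top `k` values and form a Fibonacci permutation. -/
def IsFinalFib {n : ℕ} (π : Equiv.Perm (Fin n)) (k : ℕ) : Prop :=
  k ≤ n ∧ (∀ i : Fin n, n - k ≤ (i : ℕ) → n - k ≤ ((π i : Fin n) : ℕ)) ∧
    ∀ p ∈ [[2,3,1],[3,1,2],[3,2,1]], ¬ SegContainsPat π k p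

/-- `Fib(π)`: length of the longest final segment of `π` consisting of the top values
and avoiding 231, 312, 321. -/
noncomputable def fibStat {n : ℕ} (π : Equiv.Perm (Fin n)) : ℕ := sSup {k | IsFinalFib π k}

/-- direct sum `π ⊕ σ` -/
def dsum {m n : ℕ} (π : Equiv.Perm (Fin m)) (σ : Equiv.Perm (Fin n)) :
    Equiv.Perm (Fin (m + n)) :=
  finSumFinEquiv.symm.trans ((Equiv.sumCongr π σ).trans finSumFinEquiv)

/-- skew sum `π ⊖ σ` -/
def sskew {m n : ℕ} (π : Equiv.Perm (Fin m)) (σ : Equiv.Perm (Fin n)) :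
    Equiv.Perm (Fin (m + n)) :=
  finSumFinEquiv.symm.trans ((Equiv.sumCongr π σ).trans
    ((Equiv.sumComm (Fin m) (Fin n)).trans (finSumFinEquiv.trans (finCongr (Nat.add_comm n m)))))

/-- the pattern 321 as a permutation of `Fin 3` -/
def perm321 : Equiv.Perm (Fin 3) := Fin.revPerm

/-- the pattern 312 as a permutation of `Fin 3` -/
def perm312 : Equiv.Perm (Fin 3) := (finRotate 3)⁻¹

/-- binomial coefficient on ℤ, zero when undefined -/
def C (a b : ℤ) : ℤ := if 0 ≤ b ∧ b ≤ a then (a.toNat.choose b.toNat : ℤ) else 0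

/-- generating function `G_n(v,q)` with `v = X 0`, `q = X 1` -/
noncomputable def G (n : ℕ) (S : List (List ℕ)) : MvPolynomial (Fin 2) ℤ :=
  ∑ π ∈ Finset.univ.filter (fun π : Equiv.Perm (Fin n) => AvoidsAll π S),
    X 0 ^ fibStat π * X 1 ^ invNum π

/-- Fibonacci generating function `F_n(q)` with `q = X 1` -/
noncomputable def Fq (n : ℕ) : MvPolynomial (Fin 2) ℤ :=
  ∑ π ∈ Finset.univ.filter
      (fun π : Equiv.Perm (Fin n) => AvoidsAll π [[2,3,1],[3,1,2],[3,2,1]]),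
    X 1 ^ invNum π

def NoFar {n : ℕ} (π : Equiv.Perm (Fin n)) : Prop :=
  ∀ i j : Fin n, (i:ℕ) + 2 ≤ (j:ℕ) → π i < π j

lemma strictMono_vec3 {n : ℕ} {a b c : Fin n} (h1 : a < b) (h2 : b < c) :
    StrictMono ![a, b, c] := by
  rw [Fin.strictMono_iff_lt_succ]
  intro i
  fin_cases i <;> simpa

lemma noFar_of_avoids {n : ℕ} {π : Equiv.Perm (Fin n)}
    (hav : AvoidsAll π [[2,3,1],[3,1,2],[3,2,1]]) : NoFar π := by
  by_contra hnf
  unfold NoFar at hnf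
  push_neg at hnf
  obtain ⟨i, j, hij, hle⟩ := hnf
  have hne : π i ≠ π j := fun hc => by
    have h2 : i = j := π.injective hc
    rw [h2] at hij; omega
  have hji : (π j : ℕ) < (π i : ℕ) := by
    rw [Fin.le_def] at hle
    rcases lt_or_eq_of_le hle with h | h
    · exact h
    · exact absurd (Fin.ext h) (Ne.symm hne)
  have hmlt : (i:ℕ) + 1 < n := by have := j.isLt; omega
  set m : Fin n := ⟨(i:ℕ)+1, hmlt⟩ with hm
  have him : i < m := by rw [Fin.lt_def]; simp [hm]
  have hmj : m < j := by rw [Fin.lt_def]; simp [hm]; omega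
  have hmono := strictMono_vec3 him hmj
  have hmi : π m ≠ π i := fun hc => by
    have := π.injective hc; rw [this] at him; exact lt_irrefl _ him
  have hmj' : π m ≠ π j := fun hc => by
    have := π.injective hc; rw [this] at hmj; exact lt_irrefl _ hmj
  rcases lt_trichotomy ((π m : ℕ)) ((π j : ℕ)) with hA | hA | hA
  · -- pattern 3 1 2
    refine hav [3,1,2] (by simp) ⟨![i, m, j], hmono, ?_⟩
    intro a b
    fin_cases a <;> fin_cases b <;>
      simp only [List.get, Matrix.cons_val_zero, Matrix.cons_val_one, Matrix.head_cons,
        Matrix.cons_val_two, Matrix.tail_cons, Fin.lt_def, Fin.mk_one, Fin.mk_zero] <;>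
      norm_num <;> omega
  · exact absurd (Fin.ext hA) hmj'
  · rcases lt_trichotomy ((π m : ℕ)) ((π i : ℕ)) with hB | hB | hB
    · -- pattern 3 2 1
      refine hav [3,2,1] (by simp) ⟨![i, m, j], hmono, ?_⟩
      intro a b
      fin_cases a <;> fin_cases b <;>
        simp only [List.get, Matrix.cons_val_zero, Matrix.cons_val_one, Matrix.head_cons,
          Matrix.cons_val_two, Matrix.tail_cons, Fin.lt_def, Fin.mk_one, Fin.mk_zero] <;>
        norm_num <;> omega
    · exact absurd (Fin.ext hB) hmi
    · -- pattern 2 3 1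
      refine hav [2,3,1] (by simp) ⟨![i, m, j], hmono, ?_⟩
      intro a b
      fin_cases a <;> fin_cases b <;>
        simp only [List.get, Matrix.cons_val_zero, Matrix.cons_val_one, Matrix.head_cons,
          Matrix.cons_val_two, Matrix.tail_cons, Fin.lt_def, Fin.mk_one, Fin.mk_zero] <;>
        norm_num <;> omega

lemma avoids_of_noFar {n : ℕ} {π : Equiv.Perm (Fin n)}
    (hnf : NoFar π) : AvoidsAll π [[2,3,1],[3,1,2],[3,2,1]] := by
  intro p hp hcon
  obtain ⟨f, hmono, hiff⟩ := hcon
  fin_cases hp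
  all_goals {
    have h01 : f ⟨0, by norm_num⟩ < f ⟨1, by norm_num⟩ := hmono (by simp [Fin.lt_def])
    have h12 : f ⟨1, by norm_num⟩ < f ⟨2, by norm_num⟩ := hmono (by simp [Fin.lt_def])
    rw [Fin.lt_def] at h01 h12
    have h02 : ((f ⟨0, by norm_num⟩ : Fin n) : ℕ) + 2 ≤ ((f ⟨2, by norm_num⟩ : Fin n) : ℕ) := by
      omega
    have hval : π (f ⟨2, by norm_num⟩) < π (f ⟨0, by norm_num⟩) :=
      (hiff ⟨2, by norm_num⟩ ⟨0, by norm_num⟩).mp (by norm_num)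
    have := hnf (f ⟨0, by norm_num⟩) (f ⟨2, by norm_num⟩) h02
    exact absurd hval (not_lt.mpr (le_of_lt this))
  }

lemma card_filter_ge (n a : ℕ) :
    (Finset.univ.filter (fun j : Fin n => a ≤ (j:ℕ))).card = n - a := by
  have hmap : (Finset.univ.filter (fun j : Fin n => a ≤ (j:ℕ))).map Fin.valEmbedding
      = Finset.Ico a n := by
    ext x
    simp only [Finset.mem_map, Finset.mem_filter, Finset.mem_univ, true_and,
      Fin.valEmbedding_apply, Finset.mem_Ico]
    constructor
    · rintro ⟨j, hj, rfl⟩; exact ⟨hj, j.isLt⟩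
    · rintro ⟨h1, h2⟩; exact ⟨⟨x, h2⟩, h1, rfl⟩
  rw [← Finset.card_map Fin.valEmbedding, hmap, Nat.card_Ico]

lemma card_filter_lt' (n a : ℕ) :
    (Finset.univ.filter (fun j : Fin n => (j:ℕ) < a)).card = min a n := by
  have hmap : (Finset.univ.filter (fun j : Fin n => (j:ℕ) < a)).map Fin.valEmbedding
      = Finset.range (min a n) := by
    ext x
    simp only [Finset.mem_map, Finset.mem_filter, Finset.mem_univ, true_and,
      Fin.valEmbedding_apply, Finset.mem_range, lt_min_iff]
    constructor
    · rintro ⟨j, hj, rfl⟩; exact ⟨hj, j.isLt⟩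
    · rintro ⟨h1, h2⟩; exact ⟨⟨x, h2⟩, h1, rfl⟩
  rw [← Finset.card_map Fin.valEmbedding, hmap, Finset.card_range]

lemma val_ub {n : ℕ} {π : Equiv.Perm (Fin n)} (h : NoFar π) (i : Fin n) :
    (π i : ℕ) ≤ (i:ℕ) + 1 := by
  have hcard := Finset.card_le_card_of_injOn
    (f := π)
    (s := Finset.univ.filter (fun j : Fin n => (i:ℕ) + 2 ≤ (j:ℕ)))
    (t := Finset.univ.filter (fun v : Fin n => (π i : ℕ) + 1 ≤ (v:ℕ)))
    (by
      intro j hj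
      simp only [Finset.coe_filter, Finset.mem_coe, Finset.mem_filter, Finset.mem_univ, true_and, Set.mem_setOf_eq] at hj ⊢
      have := h i j hj
      rw [Fin.lt_def] at this
      omega)
    (π.injective.injOn)
  rw [card_filter_ge, card_filter_ge] at hcard
  have h1 := i.isLt
  have h2 := (π i).isLt
  omega

lemma val_lb {n : ℕ} {π : Equiv.Perm (Fin n)} (h : NoFar π) (i : Fin n) :
    (i:ℕ) ≤ (π i : ℕ) + 1 := by
  have hcard := Finset.card_le_card_of_injOn
    (f := π)
    (s := Finset.univ.filter (fun j : Fin n => (j:ℕ) < (i:ℕ) - 1))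
    (t := Finset.univ.filter (fun v : Fin n => (v:ℕ) < (π i : ℕ)))
    (by
      intro j hj
      simp only [Finset.coe_filter, Finset.mem_coe, Finset.mem_filter, Finset.mem_univ, true_and, Set.mem_setOf_eq] at hj ⊢
      have hji : (j:ℕ) + 2 ≤ (i:ℕ) := by omega
      have := h j i hji
      rw [Fin.lt_def] at this
      omega)
    (π.injective.injOn)
  rw [card_filter_lt', card_filter_lt'] at hcard
  have h1 := i.isLt
  have h2 := (π i).isLt
  omega

lemma swap_down {n : ℕ} {π : Equiv.Perm (Fin n)} (h : NoFar π) :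
    ∀ i : Fin n, (π i : ℕ) = (i:ℕ) + 1 →
      ∃ hj : (i:ℕ) + 1 < n, (π ⟨(i:ℕ)+1, hj⟩ : ℕ) = (i:ℕ) := by
  have H : ∀ v : ℕ, ∀ i : Fin n, (i:ℕ) = v → (π i : ℕ) = (i:ℕ) + 1 →
      ∃ hj : (i:ℕ) + 1 < n, (π ⟨(i:ℕ)+1, hj⟩ : ℕ) = (i:ℕ) := by
    intro v
    induction v using Nat.strong_induction_on with
    | _ v ih =>
    intro i hiv hpi
    subst hiv
    have hj : (i:ℕ) + 1 < n := by have := (π i).isLt; omega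
    refine ⟨hj, ?_⟩
    set w : Fin n := π.symm i with hw
    have hpw : π w = i := π.apply_symm_apply i
    have hwv : (π w : ℕ) = (i:ℕ) := by rw [hpw]
    have hub := val_ub h w
    have hlb := val_lb h w
    rw [hwv] at hub hlb
    have hwne : (w:ℕ) ≠ (i:ℕ) := by
      intro hc
      have : w = i := Fin.ext hc
      rw [this] at hpw
      rw [hpw] at hpi
      omega
    rcases Nat.lt_or_ge (w:ℕ) (i:ℕ) with hlt | hge
    · have hwv2 : (π w : ℕ) = (w:ℕ) + 1 := by omega
      obtain ⟨hj2, hval⟩ := ih (w:ℕ) (by omega) w rfl hwv2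
      have hwi2 : (⟨(w:ℕ)+1, hj2⟩ : Fin n) = i := Fin.ext (show (w:ℕ)+1 = (i:ℕ) by omega)
      rw [hwi2, hpi] at hval
      omega
    · have hwe : (w:ℕ) = (i:ℕ) + 1 := by omega
      have heq : (⟨(i:ℕ)+1, hj⟩ : Fin n) = w := Fin.ext (show (i:ℕ)+1 = (w:ℕ) by omega)
      rw [heq, hpw]
  exact fun i => H (i:ℕ) i rfl

lemma swap_up {n : ℕ} {π : Equiv.Perm (Fin n)} (h : NoFar π) :
    ∀ i : Fin n, 1 ≤ (i:ℕ) → (π i : ℕ) = (i:ℕ) - 1 →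
      (π ⟨(i:ℕ)-1, lt_of_le_of_lt (Nat.sub_le _ _) i.isLt⟩ : ℕ) = (i:ℕ) := by
  have H : ∀ v : ℕ, ∀ i : Fin n, (i:ℕ) = v → 1 ≤ (i:ℕ) → (π i : ℕ) = (i:ℕ) - 1 →
      (π ⟨(i:ℕ)-1, lt_of_le_of_lt (Nat.sub_le _ _) i.isLt⟩ : ℕ) = (i:ℕ) := by
    intro v
    induction v using Nat.strong_induction_on with
    | _ v ih =>
    intro i hiv h1 hpi
    subst hiv
    set m : Fin n := ⟨(i:ℕ)-1, lt_of_le_of_lt (Nat.sub_le _ _) i.isLt⟩ with hm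
    have hub := val_ub h m
    have hlb := val_lb h m
    have hmv : (m:ℕ) = (i:ℕ) - 1 := rfl
    have hne1 : (π m : ℕ) ≠ (i:ℕ) - 1 := by
      intro hc
      have heq : π m = π i := Fin.ext (by rw [hc, hpi])
      have := π.injective heq
      rw [this] at hmv
      omega
    rcases Nat.lt_or_ge ((π m : ℕ)) ((i:ℕ)) with hlt | hge
    · have h2 : 2 ≤ (i:ℕ) := by omega
      have hpm : (π m : ℕ) = (m:ℕ) - 1 := by omega
      have hval := ih (m:ℕ) (by omega) m rfl (by omega) hpm
      have heq2 : π (⟨(m:ℕ)-1, lt_of_le_of_lt (Nat.sub_le _ _) m.isLt⟩ : Fin n) = π i :=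
        Fin.ext (by rw [hval, hpi])
      have heq3 := π.injective heq2
      have hvals : (m:ℕ)-1 = (i:ℕ) := congrArg Fin.val heq3
      omega
    · omega
  exact fun i => H (i:ℕ) i rfl

def Sparse (s : Finset ℕ) : Prop := ∀ i ∈ s, i + 1 ∉ s

noncomputable def Dset {n : ℕ} (π : Equiv.Perm (Fin n)) : Finset ℕ :=
  (Finset.range (n-1)).filter
    (fun i => ∃ (h1 : i < n) (h2 : i+1 < n), (π ⟨i+1,h2⟩ : ℕ) < (π ⟨i,h1⟩ : ℕ))

lemma mem_Dset_bound {n : ℕ} {π : Equiv.Perm (Fin n)} {i : ℕ} (hd : i ∈ Dset π) :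
    i + 1 < n := by
  have := Finset.mem_range.mp (Finset.mem_filter.mp hd).1
  omega

lemma mem_Dset_iff {n : ℕ} {π : Equiv.Perm (Fin n)} {i : ℕ} (h2 : i + 1 < n) :
    i ∈ Dset π ↔ (π ⟨i+1,h2⟩ : ℕ) < (π ⟨i, by omega⟩ : ℕ) := by
  unfold Dset
  rw [Finset.mem_filter, Finset.mem_range]
  constructor
  · rintro ⟨-, h1', h2', hlt⟩
    exact hlt
  · intro hlt
    exact ⟨by omega, by omega, h2, hlt⟩

lemma desc_val {n : ℕ} {π : Equiv.Perm (Fin n)} (h : NoFar π) {i : ℕ} (hd : i ∈ Dset π) :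
    ∃ (h1 : i < n) (h2 : i + 1 < n),
      (π ⟨i,h1⟩ : ℕ) = i + 1 ∧ (π ⟨i+1,h2⟩ : ℕ) = i := by
  have h2 := mem_Dset_bound hd
  have h1 : i < n := by omega
  have hlt := (mem_Dset_iff h2).mp hd
  have hub := val_ub h ⟨i, h1⟩
  have hlb := val_lb h ⟨i+1, h2⟩
  simp only [Fin.val_mk] at hub hlb
  refine ⟨h1, h2, by omega, by omega⟩

lemma val_formula {n : ℕ} {π : Equiv.Perm (Fin n)} (h : NoFar π) (i : Fin n) :
    (π i : ℕ) = if (i:ℕ) ∈ Dset π then (i:ℕ)+1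
      else if (i:ℕ)-1 ∈ Dset π ∧ 1 ≤ (i:ℕ) then (i:ℕ)-1 else (i:ℕ) := by
  split_ifs with hd1 hd2
  · obtain ⟨h1, h2, hv1, hv2⟩ := desc_val h hd1
    have : (⟨(i:ℕ), h1⟩ : Fin n) = i := Fin.ext rfl
    rw [this] at hv1
    exact hv1
  · obtain ⟨hd, hle⟩ := hd2
    obtain ⟨h1, h2, hv1, hv2⟩ := desc_val h hd
    have : (⟨(i:ℕ)-1+1, h2⟩ : Fin n) = i := Fin.ext (by simp; omega)
    rw [this] at hv2
    exact hv2
  · push_neg at hd2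
    have hub := val_ub h i
    have hlb := val_lb h i
    have hne1 : (π i : ℕ) ≠ (i:ℕ) + 1 := by
      intro hc
      obtain ⟨hj, hval⟩ := swap_down h i hc
      apply hd1
      rw [mem_Dset_iff hj]
      have : (⟨(i:ℕ), by omega⟩ : Fin n) = i := Fin.ext rfl
      rw [this, hval, hc]
      omega
    have hne2 : 1 ≤ (i:ℕ) → (π i : ℕ) ≠ (i:ℕ) - 1 := by
      intro hle hc
      have hval := swap_up h i hle hc
      have hin : (i:ℕ) - 1 ∈ Dset π := by
        have h2 : ((i:ℕ)-1) + 1 < n := by have := i.isLt; omega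
        rw [mem_Dset_iff h2]
        have e1 : (⟨(i:ℕ)-1+1, h2⟩ : Fin n) = i := Fin.ext (by simp; omega)
        show (π ⟨(i:ℕ)-1+1, h2⟩ : ℕ) <
          (π ⟨(i:ℕ)-1, lt_of_le_of_lt (Nat.sub_le _ _) i.isLt⟩ : ℕ)
        rw [e1, hval, hc]
        omega
      have := hd2 hin
      omega
    rcases Nat.eq_zero_or_pos (i:ℕ) with h0 | h0
    · omega
    · have := hne2 h0
      omega

lemma dset_sparse {n : ℕ} {π : Equiv.Perm (Fin n)} (h : NoFar π) : Sparse (Dset π) := by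
  intro i hi hi1
  obtain ⟨h1, h2, hv1, hv2⟩ := desc_val h hi
  obtain ⟨h1', h2', hv1', hv2'⟩ := desc_val h hi1
  have e : (π ⟨i+1, h2⟩ : ℕ) = (i+1) + 1 := hv1'
  omega

lemma dset_subset {n : ℕ} (π : Equiv.Perm (Fin n)) : Dset π ⊆ Finset.range (n-1) :=
  Finset.filter_subset _ _

lemma invNum_eq {n : ℕ} {π : Equiv.Perm (Fin n)} (h : NoFar π) :
    invNum π = (Dset π).card := by
  unfold invNum
  apply Finset.card_bij (fun p _ => ((p.1 : Fin n) : ℕ))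
  · rintro ⟨a, b⟩ hab
    simp only [Finset.mem_filter, Finset.mem_univ, true_and] at hab
    obtain ⟨hlt, hinv⟩ := hab
    have hv : (b:ℕ) = (a:ℕ) + 1 := by
      by_contra hne
      have hd : (a:ℕ) + 2 ≤ (b:ℕ) := by rw [Fin.lt_def] at hlt; omega
      exact absurd hinv (not_lt.mpr (le_of_lt (h a b hd)))
    have h2 : (a:ℕ) + 1 < n := hv ▸ b.isLt
    rw [mem_Dset_iff h2]
    have e1 : (⟨(a:ℕ)+1, h2⟩ : Fin n) = b := Fin.ext (by simp [hv])
    rw [e1]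
    show (π b : ℕ) < (π a : ℕ)
    exact Fin.lt_def.mp hinv
  · rintro ⟨a, b⟩ ha ⟨c, d⟩ hc heq
    simp only [Finset.mem_filter, Finset.mem_univ, true_and] at ha hc
    have hv1 : (b:ℕ) = (a:ℕ) + 1 := by
      by_contra hne
      have hd : (a:ℕ) + 2 ≤ (b:ℕ) := by rw [Fin.lt_def] at ha; omega
      exact absurd ha.2 (not_lt.mpr (le_of_lt (h a b hd)))
    have hv2 : (d:ℕ) = (c:ℕ) + 1 := by
      by_contra hne
      have hd : (c:ℕ) + 2 ≤ (d:ℕ) := by rw [Fin.lt_def] at hc; omega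
      exact absurd hc.2 (not_lt.mpr (le_of_lt (h c d hd)))
    have hac : a = c := Fin.ext heq
    have hbd : b = d := Fin.ext (by omega)
    rw [Prod.mk.injEq]
    exact ⟨hac, hbd⟩
  · intro i hi
    have h2 := mem_Dset_bound hi
    refine ⟨(⟨i, by omega⟩, ⟨i+1, h2⟩), ?_, rfl⟩
    simp only [Finset.mem_filter, Finset.mem_univ, true_and]
    constructor
    · rw [Fin.lt_def]; simp
    · rw [Fin.lt_def]
      exact (mem_Dset_iff h2).mp hi

def gfun {n : ℕ} (D : Finset ℕ) (i : Fin n) : Fin n :=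
  if h1 : (i:ℕ) ∈ D ∧ (i:ℕ)+1 < n then ⟨(i:ℕ)+1, h1.2⟩
  else if h2 : (i:ℕ)-1 ∈ D ∧ 1 ≤ (i:ℕ) then
    ⟨(i:ℕ)-1, lt_of_le_of_lt (Nat.sub_le _ _) i.isLt⟩
  else i

lemma gfun_val {n : ℕ} {D : Finset ℕ} (hD : ∀ x ∈ D, x + 1 < n) (i : Fin n) :
    ((gfun D i : Fin n) : ℕ) = if (i:ℕ) ∈ D then (i:ℕ)+1
      else if (i:ℕ)-1 ∈ D ∧ 1 ≤ (i:ℕ) then (i:ℕ)-1 else (i:ℕ) := by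
  rw [gfun]
  by_cases c1 : (i:ℕ) ∈ D
  · rw [dif_pos ⟨c1, hD _ c1⟩, if_pos c1]
  · rw [dif_neg (fun hc => c1 hc.1), if_neg c1]
    by_cases c2 : (i:ℕ)-1 ∈ D ∧ 1 ≤ (i:ℕ)
    · rw [dif_pos c2, if_pos c2]
    · rw [dif_neg c2, if_neg c2]

lemma gfun_invol {n : ℕ} {D : Finset ℕ} (hD : ∀ x ∈ D, x + 1 < n) (hs : Sparse D) :
    Function.Involutive (gfun (n := n) D) := by
  intro i
  by_cases c1 : (i:ℕ) ∈ D
  · have hb := hD _ c1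
    have e1 : gfun D i = ⟨(i:ℕ)+1, hb⟩ := by rw [gfun, dif_pos ⟨c1, hb⟩]
    rw [e1, gfun]
    rw [dif_neg (show ¬(((⟨(i:ℕ)+1, hb⟩ : Fin n):ℕ) ∈ D ∧ ((⟨(i:ℕ)+1, hb⟩ : Fin n):ℕ)+1 < n)
      from fun hc => hs _ c1 hc.1)]
    rw [dif_pos (show ((⟨(i:ℕ)+1, hb⟩ : Fin n):ℕ)-1 ∈ D ∧ 1 ≤ ((⟨(i:ℕ)+1, hb⟩ : Fin n):ℕ)
      from ⟨by simpa using c1, by simp⟩)]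
    exact Fin.ext (by simp)
  · by_cases c2 : (i:ℕ)-1 ∈ D ∧ 1 ≤ (i:ℕ)
    · have e1 : gfun D i = ⟨(i:ℕ)-1, lt_of_le_of_lt (Nat.sub_le _ _) i.isLt⟩ := by
        rw [gfun, dif_neg (fun hc => c1 hc.1), dif_pos c2]
      rw [e1, gfun]
      have hb2 : ((i:ℕ)-1) + 1 < n := by have := i.isLt; omega
      rw [dif_pos (show ((⟨(i:ℕ)-1, lt_of_le_of_lt (Nat.sub_le _ _) i.isLt⟩ : Fin n):ℕ) ∈ D ∧
          ((⟨(i:ℕ)-1, lt_of_le_of_lt (Nat.sub_le _ _) i.isLt⟩ : Fin n):ℕ)+1 < n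
        from ⟨c2.1, hb2⟩)]
      exact Fin.ext (by simp; omega)
    · have e1 : gfun D i = i := by rw [gfun, dif_neg (fun hc => c1 hc.1), dif_neg c2]
      rw [e1, gfun, dif_neg (fun hc => c1 hc.1), dif_neg c2]

noncomputable def permD {n : ℕ} (D : Finset ℕ) (hD : ∀ x ∈ D, x + 1 < n) (hs : Sparse D) :
    Equiv.Perm (Fin n) :=
  (gfun_invol hD hs).toPerm _

lemma permD_val {n : ℕ} {D : Finset ℕ} (hD : ∀ x ∈ D, x + 1 < n) (hs : Sparse D) (i : Fin n) :
    ((permD D hD hs i : Fin n) : ℕ) = if (i:ℕ) ∈ D then (i:ℕ)+1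
      else if (i:ℕ)-1 ∈ D ∧ 1 ≤ (i:ℕ) then (i:ℕ)-1 else (i:ℕ) :=
  gfun_val hD i

lemma permD_noFar {n : ℕ} {D : Finset ℕ} (hD : ∀ x ∈ D, x + 1 < n) (hs : Sparse D) :
    NoFar (permD D hD hs) := by
  intro i j hij
  rw [Fin.lt_def, permD_val hD hs i, permD_val hD hs j]
  by_cases c1 : (i:ℕ) ∈ D
  · rw [if_pos c1]
    have hnadj : (i:ℕ)+1 ∉ D := hs _ c1
    by_cases d1 : (j:ℕ) ∈ D
    · rw [if_pos d1]
      have : (j:ℕ) ≠ (i:ℕ)+1 := fun hc => hnadj (hc ▸ d1)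
      omega
    · rw [if_neg d1]
      by_cases d2 : (j:ℕ)-1 ∈ D ∧ 1 ≤ (j:ℕ)
      · rw [if_pos d2]
        have : (j:ℕ)-1 ≠ (i:ℕ)+1 := fun hc => hnadj (hc ▸ d2.1)
        omega
      · rw [if_neg d2]; omega
  · rw [if_neg c1]
    have hle : (if (i:ℕ)-1 ∈ D ∧ 1 ≤ (i:ℕ) then (i:ℕ)-1 else (i:ℕ)) ≤ (i:ℕ) := by
      split_ifs <;> omega
    have hge : (if (j:ℕ) ∈ D then (j:ℕ)+1
        else if (j:ℕ)-1 ∈ D ∧ 1 ≤ (j:ℕ) then (j:ℕ)-1 else (j:ℕ)) ≥ (j:ℕ) - 1 := by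
      split_ifs <;> omega
    omega

lemma Dset_permD {n : ℕ} {D : Finset ℕ} (hD : ∀ x ∈ D, x + 1 < n) (hs : Sparse D) :
    Dset (permD D hD hs) = D := by
  ext i
  constructor
  · intro hd
    have h2 := mem_Dset_bound hd
    have hlt : ((permD D hD hs) ⟨i+1, h2⟩ : ℕ) < ((permD D hD hs) ⟨i, by omega⟩ : ℕ) :=
      (mem_Dset_iff h2).mp hd
    by_contra hc
    rw [permD_val hD hs, permD_val hD hs] at hlt
    simp only [Nat.add_sub_cancel] at hlt
    split_ifs at hlt <;> first | omega | exact hc (by assumption) |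
      exact hc (by rename_i h'; exact h'.1) | skip
    all_goals (rename_i h1 h2'; first | exact hc h2'.1 | omega)
  · intro hmem
    have hb := hD _ hmem
    rw [mem_Dset_iff hb]
    show ((permD D hD hs) ⟨i+1, hb⟩ : ℕ) < ((permD D hD hs) ⟨i, by omega⟩ : ℕ)
    rw [permD_val hD hs, permD_val hD hs]
    simp only [Nat.add_sub_cancel]
    rw [if_neg (hs _ hmem), if_pos hmem]
    rw [if_pos (show i ∈ D ∧ 1 ≤ i + 1 from ⟨hmem, by omega⟩)]
    omega

lemma eq_of_dset {n : ℕ} {π σ : Equiv.Perm (Fin n)} (hπ : NoFar π) (hσ : NoFar σ)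
    (hD : Dset π = Dset σ) : π = σ := by
  apply Equiv.ext
  intro i
  apply Fin.ext
  rw [val_formula hπ i, val_formula hσ i, hD]

noncomputable def SpF (m k : ℕ) : Finset (Finset ℕ) :=
  (Finset.powersetCard k (range m)).filter Sparse
lemma spf_card (m k : ℕ) : (SpF m k).card = (m + 1 - k).choose k := by
  induction m using Nat.strong_induction_on generalizing k with
  | _ m ih =>
  match m, k with
  | 0, 0 =>
    have : SpF 0 0 = {∅} := by
      ext s
      simp [SpF, Sparse, Finset.mem_powersetCard, Finset.card_eq_zero]
      rintro rfl
      simp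
    simp [this]
  | 0, (k+1) =>
    have : SpF 0 (k+1) = ∅ := by
      ext s
      simp [SpF, Finset.mem_powersetCard, Finset.subset_empty]
      rintro rfl h
      simp at h
    have h0 : 0 + 1 - (k+1) = 0 := by omega
    rw [this, h0]; simp
  | 1, 0 =>
    have : SpF 1 0 = {∅} := by
      ext s
      simp [SpF, Sparse, Finset.mem_powersetCard, Finset.card_eq_zero]
      rintro rfl
      simp
    simp [this]
  | 1, 1 =>
    have : SpF 1 1 = {{0}} := by
      ext s
      simp only [SpF, Finset.mem_filter, Finset.mem_powersetCard, Finset.card_eq_one,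
        Finset.mem_singleton]
      constructor
      · rintro ⟨⟨hsub, a, rfl⟩, -⟩
        have := hsub (Finset.mem_singleton_self a)
        simp at this
        subst this; rfl
      · rintro rfl
        refine ⟨⟨?_, 0, rfl⟩, ?_⟩
        · intro x hx; simp at hx; simp [hx]
        · intro i hi; simp at hi; subst hi; simp
    simp [this]
  | 1, (k+2) =>
    have : SpF 1 (k+2) = ∅ := by
      ext s
      simp only [SpF, Finset.mem_filter, Finset.mem_powersetCard, Finset.notMem_empty,
        iff_false, not_and]
      rintro ⟨hsub, hcard⟩
      have := Finset.card_le_card hsub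
      simp [hcard] at this
    have h0 : 1 + 1 - (k+2) = 0 := by omega
    rw [this, h0]; simp
  | (m+2), 0 =>
    have : SpF (m+2) 0 = {∅} := by
      ext s
      simp [SpF, Sparse, Finset.mem_powersetCard, Finset.card_eq_zero]
      rintro rfl
      simp
    simp [this]
  | (m+2), (k+1) =>
    classical
    have hsplit : (SpF (m+2) (k+1)).card =
        ((SpF (m+2) (k+1)).filter (fun s => (m+1) ∈ s)).card +
        ((SpF (m+2) (k+1)).filter (fun s => (m+1) ∉ s)).card := by
      rw [Finset.card_filter_add_card_filter_not]
    have hA : (SpF (m+2) (k+1)).filter (fun s => (m+1) ∉ s) = SpF (m+1) (k+1) := by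
      ext s
      simp only [SpF, Finset.mem_filter, Finset.mem_powersetCard]
      constructor
      · rintro ⟨⟨⟨hsub, hcard⟩, hsp⟩, hmem⟩
        refine ⟨⟨?_, hcard⟩, hsp⟩
        intro x hx
        have := hsub hx
        simp at this ⊢
        rcases Nat.lt_succ_iff_lt_or_eq.mp this with h | h
        · omega
        · exact absurd (h ▸ hx) hmem
      · rintro ⟨⟨hsub, hcard⟩, hsp⟩
        have hni : (m+1) ∉ s := fun hx => by have := hsub hx; simp at this
        exact ⟨⟨⟨fun x hx => by have := hsub hx; simp at this ⊢; omega, hcard⟩, hsp⟩, hni⟩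
    have hB : ((SpF (m+2) (k+1)).filter (fun s => (m+1) ∈ s)).card = (SpF m k).card := by
      apply Finset.card_bij (fun s _ => s.erase (m+1))
      · rintro s hs
        simp only [Finset.mem_filter, SpF, Finset.mem_powersetCard] at hs
        obtain ⟨⟨⟨hsub, hcard⟩, hsp⟩, hmem⟩ := hs
        simp only [SpF, Finset.mem_filter, Finset.mem_powersetCard]
        refine ⟨⟨?_, ?_⟩, ?_⟩
        · intro x hx
          rw [Finset.mem_erase] at hx
          have hx2 := hsub hx.2
          simp at hx2 ⊢
          have : x ≠ m := by
            rintro rfl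
            exact hsp x hx.2 (by simpa using hmem)
          omega
        · rw [Finset.card_erase_of_mem hmem, hcard]; omega
        · intro i hi
          exact fun hc => hsp i (Finset.mem_of_mem_erase hi) (Finset.mem_of_mem_erase hc)
      · intro s hs t ht hst
        simp only [Finset.mem_filter] at hs ht
        have : insert (m+1) (s.erase (m+1)) = insert (m+1) (t.erase (m+1)) := by rw [hst]
        rwa [Finset.insert_erase hs.2, Finset.insert_erase ht.2] at this
      · intro t ht
        simp only [SpF, Finset.mem_filter, Finset.mem_powersetCard] at ht
        obtain ⟨⟨hsub, hcard⟩, hsp⟩ := ht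
        have hni : (m+1) ∉ t := fun hx => by have := hsub hx; simp at this
        refine ⟨insert (m+1) t, ?_, by rw [Finset.erase_insert hni]⟩
        simp only [SpF, Finset.mem_filter, Finset.mem_powersetCard]
        refine ⟨⟨⟨?_, ?_⟩, ?_⟩, Finset.mem_insert_self _ _⟩
        · intro x hx
          rcases Finset.mem_insert.mp hx with rfl | hx
          · simp
          · have := hsub hx; simp at this ⊢; omega
        · rw [Finset.card_insert_of_notMem hni, hcard]
        · intro i hi hc
          rcases Finset.mem_insert.mp hi with rfl | hi
          · rcases Finset.mem_insert.mp hc with h | h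
            · omega
            · have := hsub h; simp at this; omega
          · rcases Finset.mem_insert.mp hc with h | h
            · have := hsub hi; simp at this; omega
            · exact hsp i hi h
    rw [hsplit, hB, hA, ih (m+1) (by omega), ih m (by omega)]
    rcases le_or_gt k (m+1) with hk | hk
    · have h1 : m + 2 + 1 - (k+1) = (m + 1 - k) + 1 := by omega
      have h2 : m + 1 + 1 - (k + 1) = m + 1 - k := by omega
      rw [h1, h2, Nat.choose_succ_succ (m+1-k) k]
    · have h1 : m + 2 + 1 - (k+1) = m + 2 - k := by omega
      rw [Nat.choose_eq_zero_of_lt (show m+1-k < k by omega),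
          Nat.choose_eq_zero_of_lt (show m+1+1-(k+1) < k+1 by omega),
          Nat.choose_eq_zero_of_lt (show m+2+1-(k+1) < k+1 by omega)]


theorem stmt9 (n k : ℕ) (h : k ≤ n) :
    {π : Equiv.Perm (Fin n) | AvoidsAll π [[2,3,1],[3,1,2],[3,2,1]] ∧ invNum π = k}.ncard =
      (n - k).choose k := by
  classical
  have hset : {π : Equiv.Perm (Fin n) | AvoidsAll π [[2,3,1],[3,1,2],[3,2,1]] ∧ invNum π = k}
      = ↑(Finset.univ.filter
        (fun π : Equiv.Perm (Fin n) => AvoidsAll π [[2,3,1],[3,1,2],[3,2,1]] ∧ invNum π = k)) := by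
    ext π; simp
  rw [hset, Set.ncard_coe_finset]
  have hcard : (Finset.univ.filter
      (fun π : Equiv.Perm (Fin n) => AvoidsAll π [[2,3,1],[3,1,2],[3,2,1]] ∧ invNum π = k)).card
      = (SpF (n-1) k).card := by
    apply Finset.card_bij (fun π _ => Dset π)
    · intro π hπ
      simp only [Finset.mem_filter, Finset.mem_univ, true_and] at hπ
      have hnf := noFar_of_avoids hπ.1
      simp only [SpF, Finset.mem_filter, Finset.mem_powersetCard]
      refine ⟨⟨dset_subset π, ?_⟩, dset_sparse hnf⟩
      rw [← invNum_eq hnf, hπ.2]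
    · intro π hπ σ hσ heq
      simp only [Finset.mem_filter, Finset.mem_univ, true_and] at hπ hσ
      exact eq_of_dset (noFar_of_avoids hπ.1) (noFar_of_avoids hσ.1) heq
    · intro D hD
      simp only [SpF, Finset.mem_filter, Finset.mem_powersetCard] at hD
      obtain ⟨⟨hsub, hcard⟩, hsp⟩ := hD
      have hD' : ∀ x ∈ D, x + 1 < n := by
        intro x hx
        have := Finset.mem_range.mp (hsub hx)
        omega
      refine ⟨permD D hD' hsp, ?_, Dset_permD hD' hsp⟩
      simp only [Finset.mem_filter, Finset.mem_univ, true_and]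
      refine ⟨avoids_of_noFar (permD_noFar hD' hsp), ?_⟩
      rw [invNum_eq (permD_noFar hD' hsp), Dset_permD hD' hsp, hcard]
  rw [hcard, spf_card]
  rcases Nat.eq_zero_or_pos n with rfl | hn
  · interval_cases k
    rfl
  · congr 1
    omega
end

section
/- For k ≥ 3 and n ≥ 1, the number of permutations of length n in Av(231, 312, 4321, 21543) with exactly k inversions is C(n-k, k) + C(n-k+1, k-2). -/
open Finset MvPolynomial
open scoped Classical

namespace Av

variable {n : ℕ}

def Vf (π : Equiv.Perm (Fin n)) (l : ℕ) : ℕ := if h : l < n then (π ⟨l, h⟩ : ℕ) else l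

lemma Vf_eq (π : Equiv.Perm (Fin n)) {l : ℕ} (h : l < n) : Vf π l = (π ⟨l, h⟩ : ℕ) :=
  dif_pos h

lemma Vf_lt (π : Equiv.Perm (Fin n)) {l : ℕ} (h : l < n) : Vf π l < n := by
  rw [Vf_eq π h]; exact (π ⟨l, h⟩).is_lt

lemma Vf_inj (π : Equiv.Perm (Fin n)) {l m : ℕ} (hl : l < n) (hm : m < n)
    (h : Vf π l = Vf π m) : l = m := by
  rw [Vf_eq π hl, Vf_eq π hm] at h
  have := π.injective (Fin.val_injective h)
  simpa [Fin.mk.injEq] using congrArg Fin.val this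

lemma Vf_ex (π : Equiv.Perm (Fin n)) {v : ℕ} (hv : v < n) : ∃ l, l < n ∧ Vf π l = v := by
  refine ⟨π.symm ⟨v, hv⟩, (π.symm ⟨v, hv⟩).is_lt, ?_⟩
  rw [Vf_eq π (π.symm ⟨v, hv⟩).is_lt]
  simp

lemma vf_apply (π : Equiv.Perm (Fin n)) (x : Fin n) : Vf π x = (π x : ℕ) := by
  have := Vf_eq π x.is_lt
  simpa using this

lemma c231 (π : Equiv.Perm (Fin n)) :
    ContainsPat π [2,3,1] ↔ ∃ a b c, a < b ∧ b < c ∧ c < n ∧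
      Vf π c < Vf π a ∧ Vf π a < Vf π b := by
  constructor
  · rintro ⟨f, hf, hspec⟩
    refine ⟨f ⟨0, by norm_num⟩, f ⟨1, by norm_num⟩, f ⟨2, by norm_num⟩,
      hf (by decide), hf (by decide),
      (f ⟨2, by norm_num⟩).is_lt, ?_, ?_⟩
    · have := (hspec ⟨2, by norm_num⟩ ⟨0, by norm_num⟩).mp (by decide)
      rw [vf_apply, vf_apply]; exact Fin.lt_def.mp this
    · have := (hspec ⟨0, by norm_num⟩ ⟨1, by norm_num⟩).mp (by decide)
      rw [vf_apply, vf_apply]; exact Fin.lt_def.mp this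
  · rintro ⟨a, b, c, hab, hbc, hc, h1, h2⟩
    have hb : b < n := lt_trans hbc hc
    have ha : a < n := lt_trans hab hb
    have e1 : Vf π a = (π ⟨a,ha⟩ : ℕ) := Vf_eq π ha
    have e2 : Vf π b = (π ⟨b,hb⟩ : ℕ) := Vf_eq π hb
    have e3 : Vf π c = (π ⟨c,hc⟩ : ℕ) := Vf_eq π hc
    refine ⟨fun i => ([⟨a,ha⟩,⟨b,hb⟩,⟨c,hc⟩] : List (Fin n)).get ⟨i.1, i.2⟩, ?_, ?_⟩
    · intro i j hij
      fin_cases i <;> fin_cases j <;>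
        simp only [List.get, Fin.lt_def, Fin.mk_lt_mk] at hij ⊢ <;> omega
    · intro i j
      fin_cases i <;> fin_cases j <;>
        simp only [List.get, Fin.lt_def, Fin.mk_lt_mk] <;> omega

lemma c312 (π : Equiv.Perm (Fin n)) :
    ContainsPat π [3,1,2] ↔ ∃ a b c, a < b ∧ b < c ∧ c < n ∧
      Vf π b < Vf π c ∧ Vf π c < Vf π a := by
  constructor
  · rintro ⟨f, hf, hspec⟩
    refine ⟨f ⟨0, by norm_num⟩, f ⟨1, by norm_num⟩, f ⟨2, by norm_num⟩,
      hf (by decide), hf (by decide),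
      (f ⟨2, by norm_num⟩).is_lt, ?_, ?_⟩
    · have := (hspec ⟨1, by norm_num⟩ ⟨2, by norm_num⟩).mp (by decide)
      rw [vf_apply, vf_apply]; exact Fin.lt_def.mp this
    · have := (hspec ⟨2, by norm_num⟩ ⟨0, by norm_num⟩).mp (by decide)
      rw [vf_apply, vf_apply]; exact Fin.lt_def.mp this
  · rintro ⟨a, b, c, hab, hbc, hc, h1, h2⟩
    have hb : b < n := lt_trans hbc hc
    have ha : a < n := lt_trans hab hb
    have e1 : Vf π a = (π ⟨a,ha⟩ : ℕ) := Vf_eq π ha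
    have e2 : Vf π b = (π ⟨b,hb⟩ : ℕ) := Vf_eq π hb
    have e3 : Vf π c = (π ⟨c,hc⟩ : ℕ) := Vf_eq π hc
    refine ⟨fun i => ([⟨a,ha⟩,⟨b,hb⟩,⟨c,hc⟩] : List (Fin n)).get ⟨i.1, i.2⟩, ?_, ?_⟩
    · intro i j hij
      fin_cases i <;> fin_cases j <;>
        simp only [List.get, Fin.lt_def, Fin.mk_lt_mk] at hij ⊢ <;> omega
    · intro i j
      fin_cases i <;> fin_cases j <;>
        simp only [List.get, Fin.lt_def, Fin.mk_lt_mk] <;> omega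

lemma c4321 (π : Equiv.Perm (Fin n)) :
    ContainsPat π [4,3,2,1] ↔ ∃ a b c d, a < b ∧ b < c ∧ c < d ∧ d < n ∧
      Vf π d < Vf π c ∧ Vf π c < Vf π b ∧ Vf π b < Vf π a := by
  constructor
  · rintro ⟨f, hf, hspec⟩
    refine ⟨f ⟨0, by norm_num⟩, f ⟨1, by norm_num⟩, f ⟨2, by norm_num⟩, f ⟨3, by norm_num⟩,
      hf (by decide), hf (by decide), hf (by decide),
      (f ⟨3, by norm_num⟩).is_lt, ?_, ?_, ?_⟩
    · have := (hspec ⟨3, by norm_num⟩ ⟨2, by norm_num⟩).mp (by decide)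
      rw [vf_apply, vf_apply]; exact Fin.lt_def.mp this
    · have := (hspec ⟨2, by norm_num⟩ ⟨1, by norm_num⟩).mp (by decide)
      rw [vf_apply, vf_apply]; exact Fin.lt_def.mp this
    · have := (hspec ⟨1, by norm_num⟩ ⟨0, by norm_num⟩).mp (by decide)
      rw [vf_apply, vf_apply]; exact Fin.lt_def.mp this
  · rintro ⟨a, b, c, d, hab, hbc, hcd, hd, h1, h2, h3⟩
    have hc : c < n := lt_trans hcd hd
    have hb : b < n := lt_trans hbc hc
    have ha : a < n := lt_trans hab hb
    have e1 : Vf π a = (π ⟨a,ha⟩ : ℕ) := Vf_eq π ha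
    have e2 : Vf π b = (π ⟨b,hb⟩ : ℕ) := Vf_eq π hb
    have e3 : Vf π c = (π ⟨c,hc⟩ : ℕ) := Vf_eq π hc
    have e4 : Vf π d = (π ⟨d,hd⟩ : ℕ) := Vf_eq π hd
    refine ⟨fun i => ([⟨a,ha⟩,⟨b,hb⟩,⟨c,hc⟩,⟨d,hd⟩] : List (Fin n)).get ⟨i.1, i.2⟩, ?_, ?_⟩
    · intro i j hij
      fin_cases i <;> fin_cases j <;>
        simp only [List.get, Fin.lt_def, Fin.mk_lt_mk] at hij ⊢ <;> omega
    · intro i j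
      fin_cases i <;> fin_cases j <;>
        simp only [List.get, Fin.lt_def, Fin.mk_lt_mk] <;> omega

lemma c21543 (π : Equiv.Perm (Fin n)) :
    ContainsPat π [2,1,5,4,3] ↔ ∃ a b c d e, a < b ∧ b < c ∧ c < d ∧ d < e ∧ e < n ∧
      Vf π b < Vf π a ∧ Vf π a < Vf π e ∧ Vf π e < Vf π d ∧ Vf π d < Vf π c := by
  constructor
  · rintro ⟨f, hf, hspec⟩
    refine ⟨f ⟨0, by norm_num⟩, f ⟨1, by norm_num⟩, f ⟨2, by norm_num⟩, f ⟨3, by norm_num⟩,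
      f ⟨4, by norm_num⟩,
      hf (by decide), hf (by decide), hf (by decide),
      hf (by decide), (f ⟨4, by norm_num⟩).is_lt, ?_, ?_, ?_, ?_⟩
    · have := (hspec ⟨1, by norm_num⟩ ⟨0, by norm_num⟩).mp (by decide)
      rw [vf_apply, vf_apply]; exact Fin.lt_def.mp this
    · have := (hspec ⟨0, by norm_num⟩ ⟨4, by norm_num⟩).mp (by decide)
      rw [vf_apply, vf_apply]; exact Fin.lt_def.mp this
    · have := (hspec ⟨4, by norm_num⟩ ⟨3, by norm_num⟩).mp (by decide)
      rw [vf_apply, vf_apply]; exact Fin.lt_def.mp this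
    · have := (hspec ⟨3, by norm_num⟩ ⟨2, by norm_num⟩).mp (by decide)
      rw [vf_apply, vf_apply]; exact Fin.lt_def.mp this
  · rintro ⟨a, b, c, d, e, hab, hbc, hcd, hde, he, h1, h2, h3, h4⟩
    have hd : d < n := lt_trans hde he
    have hc : c < n := lt_trans hcd hd
    have hb : b < n := lt_trans hbc hc
    have ha : a < n := lt_trans hab hb
    have e1 : Vf π a = (π ⟨a,ha⟩ : ℕ) := Vf_eq π ha
    have e2 : Vf π b = (π ⟨b,hb⟩ : ℕ) := Vf_eq π hb
    have e3 : Vf π c = (π ⟨c,hc⟩ : ℕ) := Vf_eq π hc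
    have e4 : Vf π d = (π ⟨d,hd⟩ : ℕ) := Vf_eq π hd
    have e5 : Vf π e = (π ⟨e,he⟩ : ℕ) := Vf_eq π he
    refine ⟨fun i => ([⟨a,ha⟩,⟨b,hb⟩,⟨c,hc⟩,⟨d,hd⟩,⟨e,he⟩] : List (Fin n)).get ⟨i.1, i.2⟩, ?_, ?_⟩
    · intro i j hij
      fin_cases i <;> fin_cases j <;>
        simp only [List.get, Fin.lt_def, Fin.mk_lt_mk] at hij ⊢ <;> omega
    · intro i j
      fin_cases i <;> fin_cases j <;>
        simp only [List.get, Fin.lt_def, Fin.mk_lt_mk] <;> omega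


def Lay (π : Equiv.Perm (Fin n)) : Prop :=
  ∀ i j, i < j → j < n → Vf π j < Vf π i → Vf π i + i = Vf π j + j

def DesAt (π : Equiv.Perm (Fin n)) (i : ℕ) : Prop := i + 1 < n ∧ Vf π (i+1) < Vf π i

def NPB (π : Equiv.Perm (Fin n)) : Prop :=
  ∀ i j, i < j → DesAt π j → DesAt π (j+1) → ¬ DesAt π i

lemma lay_of_avoid {π : Equiv.Perm (Fin n)} (h231 : ¬ ContainsPat π [2,3,1])
    (h312 : ¬ ContainsPat π [3,1,2]) : Lay π := by
  intro i j hij hj hinv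
  have hi : i < n := hij.trans hj
  have S1 : ∀ l, i < l → l < j → Vf π j < Vf π l ∧ Vf π l < Vf π i := by
    intro l hl1 hl2
    have hln : l < n := hl2.trans hj
    rcases lt_trichotomy (Vf π l) (Vf π i) with h | h | h
    · rcases lt_trichotomy (Vf π j) (Vf π l) with h' | h' | h'
      · exact ⟨h', h⟩
      · exact absurd (Vf_inj π hj hln h') (by omega)
      · exact absurd ((c312 π).mpr ⟨i, l, j, hl1, hl2, hj, h', hinv⟩) h312
    · exact absurd (Vf_inj π hln hi h) (by omega)
    · exact absurd ((c231 π).mpr ⟨i, l, j, hl1, hl2, hj, hinv, h⟩) h231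
  have S2 : ∀ p, p < n → Vf π j < Vf π p → Vf π p < Vf π i → i < p ∧ p < j := by
    intro p hp h1 h2
    rcases lt_trichotomy p i with h | h | h
    · exact absurd ((c231 π).mpr ⟨p, i, j, h, hij, hj, h1, h2⟩) h231
    · subst h; omega
    · refine ⟨h, ?_⟩
      rcases lt_trichotomy p j with h' | h' | h'
      · exact h'
      · subst h'; omega
      · exact absurd ((c312 π).mpr ⟨i, j, p, hij, h', hp, h1, h2⟩) h312
  have himg : (Finset.Icc i j).image (Vf π) = Finset.Icc (Vf π j) (Vf π i) := by
    apply Finset.Subset.antisymm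
    · intro v hv
      simp only [Finset.mem_image, Finset.mem_Icc] at hv ⊢
      obtain ⟨l, ⟨hl1, hl2⟩, rfl⟩ := hv
      rcases eq_or_lt_of_le hl1 with h | h
      · subst h; omega
      rcases eq_or_lt_of_le hl2 with h' | h'
      · subst h'; omega
      have := S1 l h h'
      omega
    · intro v hv
      simp only [Finset.mem_image, Finset.mem_Icc] at hv ⊢
      obtain ⟨hv1, hv2⟩ := hv
      have hvn : v < n := lt_of_le_of_lt hv2 (Vf_lt π hi)
      obtain ⟨p, hp, rfl⟩ := Vf_ex π hvn
      rcases eq_or_lt_of_le hv1 with h | h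
      · exact ⟨j, by omega, (Vf_inj π hj hp h).symm ▸ rfl⟩
      rcases eq_or_lt_of_le hv2 with h' | h'
      · exact ⟨i, by omega, (Vf_inj π hp hi h').symm ▸ by omega⟩
      have := S2 p hp h h'
      exact ⟨p, by omega, rfl⟩
  have hcard : (Finset.Icc i j).card = (Finset.Icc (Vf π j) (Vf π i)).card := by
    rw [← himg]
    rw [Finset.card_image_of_injOn]
    intro x hx y hy hxy
    simp only [Finset.mem_coe, Finset.mem_Icc] at hx hy
    exact Vf_inj π (by omega) (by omega) hxy
  rw [Nat.card_Icc, Nat.card_Icc] at hcard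
  omega

lemma lay_avoid231 {π : Equiv.Perm (Fin n)} (hL : Lay π) : ¬ ContainsPat π [2,3,1] := by
  rw [c231]
  rintro ⟨a, b, c, hab, hbc, hc, h1, h2⟩
  have e1 := hL b c hbc hc (by omega)
  have e2 := hL a c (hab.trans hbc) hc h1
  omega

lemma lay_avoid312 {π : Equiv.Perm (Fin n)} (hL : Lay π) : ¬ ContainsPat π [3,1,2] := by
  rw [c312]
  rintro ⟨a, b, c, hab, hbc, hc, h1, h2⟩
  have e1 := hL a b hab (hbc.trans hc) (by omega)
  have e2 := hL a c (hab.trans hbc) hc h2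
  omega

lemma lay_mid {π : Equiv.Perm (Fin n)} (hL : Lay π) {i j l : ℕ} (hij : i < j) (hj : j < n)
    (hinv : Vf π j < Vf π i) (h1 : i < l) (h2 : l < j) : Vf π j < Vf π l ∧ Vf π l < Vf π i := by
  have hln : l < n := h2.trans hj
  have hi : i < n := hij.trans hj
  have e0 := hL i j hij hj hinv
  rcases lt_trichotomy (Vf π l) (Vf π j) with h | h | h
  · have := hL i l h1 hln (by omega)
    omega
  · exact absurd (Vf_inj π hln hj h) (by omega)
  rcases lt_trichotomy (Vf π l) (Vf π i) with h' | h' | h'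
  · exact ⟨h, h'⟩
  · exact absurd (Vf_inj π hln hi h') (by omega)
  · have := hL l j h2 hj h
    omega

lemma lay_L1 {π : Equiv.Perm (Fin n)} (hL : Lay π) {i j : ℕ} (hij : i < j) (hj : j < n)
    (hinv : Vf π j < Vf π i) : Vf π (i+1) < Vf π i := by
  rcases eq_or_lt_of_le (Nat.succ_le_of_lt hij) with h | h
  · have h' : i + 1 = j := h
    rw [h']; exact hinv
  · exact (lay_mid hL hij hj hinv (Nat.lt_succ_self i) h).2

lemma lay_L2 {π : Equiv.Perm (Fin n)} (hL : Lay π) {i j : ℕ} (hij : i < j) (hj : j < n)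
    (hinv : Vf π j < Vf π i) : ∀ l, i ≤ l → l < j → DesAt π l := by
  intro l hl1 hl2
  have hln1 : l + 1 < n := by omega
  refine ⟨hln1, ?_⟩
  rcases eq_or_lt_of_le hl1 with h | h
  · subst h; exact lay_L1 hL hij hj hinv
  · exact lay_L1 hL hl2 hj (lay_mid hL hij hj hinv h hl2).1

lemma avoid_to_npb {π : Equiv.Perm (Fin n)} (hL : Lay π)
    (h4321 : ¬ ContainsPat π [4,3,2,1]) (h21543 : ¬ ContainsPat π [2,1,5,4,3]) : NPB π := by
  rintro i j hij ⟨hj1, hdj⟩ ⟨hj2, hdj1⟩ ⟨hi1, hdi⟩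
  rcases eq_or_lt_of_le (Nat.succ_le_of_lt hij) with h | h
  · -- i+1 = j : descents at i, i+1=j, j+1 give 4321
    apply h4321
    rw [c4321]
    refine ⟨i, j, j+1, j+2, hij, by omega, by omega, hj2, hdj1, hdj, ?_⟩
    rw [← h]; exact hdi
  · -- i+1 < j
    rcases lt_trichotomy (Vf π i) (Vf π (j+2)) with hcmp | hcmp | hcmp
    · apply h21543
      rw [c21543]
      exact ⟨i, i+1, j, j+1, j+2, by omega, by omega, by omega, by omega, hj2,
        hdi, hcmp, hdj1, hdj⟩
    · exact absurd (Vf_inj π (by omega) hj2 hcmp) (by omega)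
    · -- inversion (i, j+2): 4 consecutive descents
      have hdall := lay_L2 hL (show i < j+2 by omega) hj2 hcmp
      have d0 := hdall i (le_refl i) (by omega)
      have d1 := hdall (i+1) (by omega) (by omega)
      have d2 := hdall (i+2) (by omega) (by omega)
      apply h4321
      rw [c4321]
      exact ⟨i, i+1, i+2, i+3, by omega, by omega, by omega, d2.1, d2.2, d1.2, d0.2⟩

lemma npb_avoid4321 {π : Equiv.Perm (Fin n)} (hL : Lay π) (hN : NPB π) :
    ¬ ContainsPat π [4,3,2,1] := by
  rw [c4321]
  rintro ⟨a, b, c, d, hab, hbc, hcd, hd, h1, h2, h3⟩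
  have hinv : Vf π d < Vf π a := by omega
  have hdall := lay_L2 hL (show a < d by omega) hd hinv
  have d0 := hdall a (le_refl a) (by omega)
  have d1 := hdall (a+1) (by omega) (by omega)
  have d2 := hdall (a+2) (by omega) (by omega)
  exact hN a (a+1) (by omega) d1 d2 d0

lemma npb_avoid21543 {π : Equiv.Perm (Fin n)} (hL : Lay π) (hN : NPB π) :
    ¬ ContainsPat π [2,1,5,4,3] := by
  rw [c21543]
  rintro ⟨a, b, c, d, e, hab, hbc, hcd, hde, he, h1, h2, h3, h4⟩
  have hinv : Vf π e < Vf π c := by omega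
  have hdall := lay_L2 hL (show c < e by omega) he hinv
  have dj := hdall (e-2) (by omega) (by omega)
  have dj1 := hdall (e-1) (by omega) (by omega)
  have da : DesAt π a := lay_L2 hL hab (by omega) h1 a (le_refl a) (by omega)
  have dj1' : DesAt π ((e-2)+1) := by
    have : (e-2)+1 = e-1 := by omega
    rw [this]; exact dj1
  exact hN a (e-2) (by omega) dj dj1' da

theorem avoidsAll_iff (π : Equiv.Perm (Fin n)) :
    AvoidsAll π [[2,3,1],[3,1,2],[4,3,2,1],[2,1,5,4,3]] ↔ Lay π ∧ NPB π := by
  constructor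
  · intro h
    have h231 := h [2,3,1] (by simp)
    have h312 := h [3,1,2] (by simp)
    have h4321 := h [4,3,2,1] (by simp)
    have h21543 := h [2,1,5,4,3] (by simp)
    have hL := lay_of_avoid h231 h312
    exact ⟨hL, avoid_to_npb hL h4321 h21543⟩
  · rintro ⟨hL, hN⟩ p hp
    simp only [List.mem_cons, List.not_mem_nil, or_false] at hp
    rcases hp with rfl | rfl | rfl | rfl
    · exact lay_avoid231 hL
    · exact lay_avoid312 hL
    · exact npb_avoid4321 hL hN
    · exact npb_avoid21543 hL hN


noncomputable def aval (π : Equiv.Perm (Fin n)) (i : ℕ) : ℕ :=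
  if DesAt π i then (if DesAt π (i+1) then 2 else 1) else 0

noncomputable def bval (π : Equiv.Perm (Fin n)) (i : ℕ) : ℕ :=
  if 1 ≤ i ∧ DesAt π (i-1) then (if 2 ≤ i ∧ DesAt π (i-2) then 2 else 1) else 0

def NoTriple (π : Equiv.Perm (Fin n)) : Prop :=
  ∀ l, ¬ (DesAt π l ∧ DesAt π (l+1) ∧ DesAt π (l+2))

lemma npb_noTriple {π : Equiv.Perm (Fin n)} (hN : NPB π) : NoTriple π := by
  rintro l ⟨h0, h1, h2⟩
  exact hN l (l+1) (by omega) h1 h2 h0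

lemma lb_aux {π : Equiv.Perm (Fin n)} (hL : Lay π) {i : ℕ} (hi : i < n)
    (hnd : i = 0 ∨ ¬ DesAt π (i-1)) : ∀ l, l < i → Vf π l < i := by
  by_contra hcon
  push_neg at hcon
  obtain ⟨l, hl, hvl⟩ := hcon
  have hi1 : 1 ≤ i := by omega
  -- there is a value < i attained at a position ≥ i
  have himg : ∃ v, v < i ∧ ∀ m, m < i → Vf π m ≠ v := by
    by_contra hcc
    push_neg at hcc
    have hsub : Finset.range i ⊆ (Finset.range i).image (Vf π) := by
      intro v hv
      simp only [Finset.mem_range] at hv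
      obtain ⟨m, hm, hvm⟩ := hcc v hv
      exact Finset.mem_image.mpr ⟨m, Finset.mem_range.mpr hm, hvm⟩
    have hcard : ((Finset.range i).image (Vf π)).card ≤ (Finset.range i).card :=
      Finset.card_image_le
    have heq := Finset.eq_of_subset_of_card_le hsub (by simpa using hcard)
    have : Vf π l ∈ Finset.range i := by
      rw [heq]
      exact Finset.mem_image.mpr ⟨l, Finset.mem_range.mpr hl, rfl⟩
    simp only [Finset.mem_range] at this
    omega
  obtain ⟨v, hv, hvm⟩ := himg
  obtain ⟨p, hp, hvp⟩ := Vf_ex π (by omega : v < n)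
  have hpi : i ≤ p := by
    by_contra hc
    exact hvm p (by omega) hvp
  have hinv : Vf π p < Vf π l := by omega
  have hlp : l < p := by omega
  have := lay_L2 hL hlp hp hinv (i-1) (by omega) (by omega)
  rcases hnd with h | h
  · omega
  · exact h this

lemma Vf_injective (π : Equiv.Perm (Fin n)) : Function.Injective (Vf π) := by
  intro x y h
  by_cases hx : x < n <;> by_cases hy : y < n
  · exact Vf_inj π hx hy h
  · have h1 := Vf_lt π hx
    rw [h, Vf] at h1
    rw [dif_neg hy] at h1
    omega
  · have h1 := Vf_lt π hy
    rw [← h, Vf] at h1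
    rw [dif_neg hx] at h1
    omega
  · rwa [Vf, Vf, dif_neg hx, dif_neg hy] at h

lemma vals_below {π : Equiv.Perm (Fin n)} {i : ℕ} (hlow : ∀ l, l < i → Vf π l < i) :
    ∀ v, v < i → ∃ l, l < i ∧ Vf π l = v := by
  intro v hv
  by_contra hc
  push_neg at hc
  have hsub : (Finset.range i).image (Vf π) ⊆ Finset.range i := by
    intro w hw
    obtain ⟨m, hm, hvm⟩ := Finset.mem_image.mp hw
    simp only [Finset.mem_range] at hm ⊢
    exact hvm ▸ hlow m hm
  have hcard : ((Finset.range i).image (Vf π)).card = i := by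
    rw [Finset.card_image_of_injective _ (Vf_injective π), Finset.card_range]
  have heq := Finset.eq_of_subset_of_card_le hsub (by rw [hcard, Finset.card_range])
  have hvmem : v ∈ (Finset.range i).image (Vf π) := by
    rw [heq]; exact Finset.mem_range.mpr hv
  obtain ⟨m, hm, hvm⟩ := Finset.mem_image.mp hvmem
  exact hc m (Finset.mem_range.mp hm) hvm

lemma des_step {π : Equiv.Perm (Fin n)} (hL : Lay π) {i : ℕ} (hd : DesAt π i) :
    Vf π (i+1) + 1 = Vf π i := by
  have := hL i (i+1) (by omega) hd.1 hd.2
  omega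

theorem val_formula {π : Equiv.Perm (Fin n)} (hL : Lay π) (hT : NoTriple π) :
    ∀ i, i < n → Vf π i + bval π i = i + aval π i := by
  intro i
  induction i using Nat.strong_induction_on with
  | _ i IH =>
  intro hi
  by_cases hb1 : 1 ≤ i ∧ DesAt π (i-1)
  · obtain ⟨hi1, hd⟩ := hb1
    have e1 : i - 1 + 1 = i := by omega
    have hstep : Vf π i + 1 = Vf π (i-1) := by
      have := des_step hL hd
      rwa [e1] at this
    have IH' := IH (i-1) (by omega) (by omega)
    by_cases hb2 : 2 ≤ i ∧ DesAt π (i-2)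
    · obtain ⟨hi2, hd2⟩ := hb2
      have hnd : ¬ DesAt π i := by
        intro hdi
        apply hT (i-2)
        refine ⟨hd2, ?_, ?_⟩
        · have e : i - 2 + 1 = i - 1 := by omega
          rw [e]; exact hd
        · have e : i - 2 + 2 = i := by omega
          rw [e]; exact hdi
      have hnd3 : ¬ (2 ≤ i - 1 ∧ DesAt π (i-1-2)) := by
        rintro ⟨h3, hd3⟩
        apply hT (i-3)
        have e : i-1-2 = i-3 := by omega
        rw [e] at hd3
        refine ⟨hd3, ?_, ?_⟩
        · have e' : i-3+1 = i-2 := by omega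
          rw [e']; exact hd2
        · have e' : i-3+2 = i-1 := by omega
          rw [e']; exact hd
      have ha : aval π i = 0 := by simp only [aval]; rw [if_neg hnd]
      have hbv : bval π i = 2 := by
        simp only [bval]; rw [if_pos ⟨hi1, hd⟩, if_pos ⟨hi2, hd2⟩]
      have ha' : aval π (i-1) = 1 := by
        simp only [aval]; rw [if_pos hd, e1, if_neg hnd]
      have hb' : bval π (i-1) = 1 := by
        simp only [bval]
        rw [if_pos ⟨by omega, by rw [show i-1-1 = i-2 by omega]; exact hd2⟩, if_neg hnd3]
      omega
    · have hbv : bval π i = 1 := by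
        simp only [bval]; rw [if_pos ⟨hi1, hd⟩, if_neg hb2]
      have hbm : bval π (i-1) = 0 := by
        simp only [bval]
        rw [if_neg]
        rintro ⟨h1', hd'⟩
        rw [show i-1-1 = i-2 by omega] at hd'
        exact hb2 ⟨by omega, hd'⟩
      by_cases hdi : DesAt π i
      · have hnd1 : ¬ DesAt π (i+1) := by
          intro hdi1
          apply hT (i-1)
          exact ⟨hd, by rwa [e1], by rw [show i-1+2 = i+1 by omega]; exact hdi1⟩
        have ha : aval π i = 1 := by simp only [aval]; rw [if_pos hdi, if_neg hnd1]
        have ha' : aval π (i-1) = 2 := by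
          simp only [aval]; rw [if_pos hd, e1, if_pos hdi]
        omega
      · have ha : aval π i = 0 := by simp only [aval]; rw [if_neg hdi]
        have ha' : aval π (i-1) = 1 := by
          simp only [aval]; rw [if_pos hd, e1, if_neg hdi]
        omega
  · have hbv : bval π i = 0 := by simp only [bval]; rw [if_neg hb1]
    have hnd : i = 0 ∨ ¬ DesAt π (i-1) := by
      by_cases h0 : i = 0
      · exact Or.inl h0
      · exact Or.inr (fun hd => hb1 ⟨by omega, hd⟩)
    have hlow := lb_aux hL hi hnd
    have hvb := vals_below hlow
    have hge : i ≤ Vf π i := by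
      by_contra hc
      obtain ⟨l, hl, hvl⟩ := hvb (Vf π i) (by omega)
      have := Vf_injective π hvl
      omega
    by_cases hdi : DesAt π i
    · have h1 : Vf π (i+1) + 1 = Vf π i := des_step hL hdi
      have hge1 : i ≤ Vf π (i+1) := by
        by_contra hc
        obtain ⟨l, hl, hvl⟩ := hvb (Vf π (i+1)) (by omega)
        have := Vf_injective π hvl
        omega
      by_cases hdi1 : DesAt π (i+1)
      · have h2 : Vf π (i+2) + 1 = Vf π (i+1) := des_step hL hdi1
        have hge2 : i ≤ Vf π (i+2) := by
          by_contra hc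
          obtain ⟨l, hl, hvl⟩ := hvb (Vf π (i+2)) (by omega)
          have := Vf_injective π hvl
          omega
        have ha : aval π i = 2 := by simp only [aval]; rw [if_pos hdi, if_pos hdi1]
        rcases eq_or_lt_of_le hge2 with he | hgt
        · rw [hbv, ha]; omega
        · exfalso
          obtain ⟨p, hp, hvp⟩ := Vf_ex π (show i < n from hi)
          have hne0 : p ≠ i := by intro he; rw [he] at hvp; omega
          have hne1 : p ≠ i+1 := by intro he; rw [he] at hvp; omega
          have hne2 : p ≠ i+2 := by intro he; rw [he] at hvp; omega
          have hplow : ¬ p < i := fun h => by have := hlow p h; omega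
          have hpbig : i+2 < p := by omega
          have hinv2 : Vf π p < Vf π (i+2) := by omega
          have := lay_L2 hL hpbig hp hinv2 (i+2) (le_refl _) (by omega)
          exact hT i ⟨hdi, hdi1, this⟩
      · have ha : aval π i = 1 := by simp only [aval]; rw [if_pos hdi, if_neg hdi1]
        rcases eq_or_lt_of_le hge1 with he | hgt
        · rw [hbv, ha]; omega
        · exfalso
          obtain ⟨p, hp, hvp⟩ := Vf_ex π (show i < n from hi)
          have hne0 : p ≠ i := by intro he; rw [he] at hvp; omega
          have hne1 : p ≠ i+1 := by intro he; rw [he] at hvp; omega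
          have hplow : ¬ p < i := fun h => by have := hlow p h; omega
          have hpbig : i+1 < p := by omega
          have hinv2 : Vf π p < Vf π (i+1) := by omega
          exact hdi1 (lay_L2 hL hpbig hp hinv2 (i+1) (le_refl _) (by omega))
    · have ha : aval π i = 0 := by simp only [aval]; rw [if_neg hdi]
      rcases eq_or_lt_of_le hge with he | hgt
      · rw [hbv, ha]; omega
      · exfalso
        obtain ⟨p, hp, hvp⟩ := Vf_ex π (show i < n from hi)
        have hne : p ≠ i := by intro he; rw [he] at hvp; omega
        have hplow : ¬ p < i := fun h => by have := hlow p h; omega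
        have hpbig : i < p := by omega
        have hinv2 : Vf π p < Vf π i := by omega
        exact hdi (lay_L2 hL hpbig hp hinv2 i (le_refl _) (by omega))

theorem perm_determined {π σ : Equiv.Perm (Fin n)} (hLπ : Lay π) (hTπ : NoTriple π)
    (hLσ : Lay σ) (hTσ : NoTriple σ) (hD : ∀ l, DesAt π l ↔ DesAt σ l) : π = σ := by
  have haval : ∀ i, aval π i = aval σ i := by
    intro i
    simp only [aval]
    exact if_congr (hD i) (if_congr (hD (i+1)) rfl rfl) rfl
  have hbval : ∀ i, bval π i = bval σ i := by
    intro i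
    simp only [bval]
    exact if_congr (and_congr_right fun _ => hD (i-1))
      (if_congr (and_congr_right fun _ => hD (i-2)) rfl rfl) rfl
  have hv : ∀ i, i < n → Vf π i = Vf σ i := by
    intro i hi
    have h1 := val_formula hLπ hTπ i hi
    have h2 := val_formula hLσ hTσ i hi
    rw [haval i, hbval i] at h1
    omega
  apply Equiv.ext
  intro x
  have := hv x x.is_lt
  rw [vf_apply, vf_apply] at this
  exact Fin.val_injective this

section Construct

variable (D : Finset ℕ)

def aF (i : ℕ) : ℕ := if i ∈ D then (if i+1 ∈ D then 2 else 1) else 0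

def bF : ℕ → ℕ
  | 0 => 0
  | 1 => if 0 ∈ D then 1 else 0
  | (i+2) => if i+1 ∈ D then (if i ∈ D then 2 else 1) else 0

def gF (i : ℕ) : ℕ := i + aF D i - bF D i

variable {D}
variable (hNT : ∀ l, ¬ (l ∈ D ∧ l+1 ∈ D ∧ l+2 ∈ D))

omit hNT in
lemma aF_le (i : ℕ) : aF D i ≤ 2 := by unfold aF; split_ifs <;> omega

omit hNT in
lemma bF_le (i : ℕ) : bF D i ≤ 2 := by
  rcases i with _ | _ | m <;> simp only [bF] <;> (try split_ifs) <;> omega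

omit hNT in
lemma gF_le (i : ℕ) : gF D i ≤ i + 2 := by
  have h := aF_le (D := D) i
  unfold gF; omega

omit hNT in
lemma gF_ge (i : ℕ) : i ≤ gF D i + 2 := by
  have h := bF_le (D := D) i
  unfold gF; omega

include hNT

set_option maxHeartbeats 1000000 in
lemma gF_key : ∀ i j, i < j → gF D j ≤ gF D i →
    (j = i+1 ∧ i ∈ D ∧ gF D i = gF D j + 1) ∨
    (j = i+2 ∧ i ∈ D ∧ i+1 ∈ D ∧ gF D i = gF D j + 2) := by
  intro i j hij hle
  have hb1 : j ≤ i + 4 := by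
    have hA := gF_le (D := D) i
    have hB := gF_ge (D := D) j
    omega
  have hcase : j = i+1 ∨ j = i+2 ∨ j = i+3 ∨ j = i+4 := by omega
  rcases hcase with rfl | rfl | rfl | rfl
  · rcases i with _ | _ | m
    · have N := hNT 0
      by_cases h1 : 0 ∈ D <;> by_cases h2 : 1 ∈ D <;> by_cases h3 : 2 ∈ D <;>
        simp_all [gF, aF, bF] <;> omega
    · have N := hNT 0
      have N1 := hNT 1
      by_cases h1 : 0 ∈ D <;> by_cases h2 : 1 ∈ D <;> by_cases h3 : 2 ∈ D <;>
        by_cases h4 : 3 ∈ D <;> simp_all [gF, aF, bF] <;> omega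
    · have N0 := hNT m
      have N1 := hNT (m+1)
      have N2 := hNT (m+2)
      by_cases h1 : m ∈ D <;> by_cases h2 : m+1 ∈ D <;> by_cases h3 : m+2 ∈ D <;>
        by_cases h4 : m+3 ∈ D <;> by_cases h5 : m+4 ∈ D <;>
        simp_all [gF, aF, bF] <;> omega
  · rcases i with _ | _ | m
    · have N := hNT 0
      by_cases h1 : 0 ∈ D <;> by_cases h2 : 1 ∈ D <;> by_cases h3 : 2 ∈ D <;>
        by_cases h4 : 3 ∈ D <;> simp_all [gF, aF, bF] <;> omega
    · have N := hNT 0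
      have N1 := hNT 1
      have N2 := hNT 2
      by_cases h1 : 0 ∈ D <;> by_cases h2 : 1 ∈ D <;> by_cases h3 : 2 ∈ D <;>
        by_cases h4 : 3 ∈ D <;> by_cases h5 : 4 ∈ D <;> simp_all [gF, aF, bF] <;> omega
    · have N0 := hNT m
      have N1 := hNT (m+1)
      have N2 := hNT (m+2)
      have N3 := hNT (m+3)
      by_cases h1 : m ∈ D <;> by_cases h2 : m+1 ∈ D <;> by_cases h3 : m+2 ∈ D <;>
        by_cases h4 : m+3 ∈ D <;> by_cases h5 : m+4 ∈ D <;> by_cases h6 : m+5 ∈ D <;>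
        simp_all [gF, aF, bF] <;> omega
  · exfalso
    rcases i with _ | _ | m
    · have N := hNT 0
      have N1 := hNT 1
      by_cases h1 : 0 ∈ D <;> by_cases h2 : 1 ∈ D <;> by_cases h3 : 2 ∈ D <;>
        by_cases h4 : 3 ∈ D <;> by_cases h5 : 4 ∈ D <;> simp_all [gF, aF, bF] <;> omega
    · have N := hNT 0
      have N1 := hNT 1
      have N2 := hNT 2
      have N3 := hNT 3
      by_cases h1 : 0 ∈ D <;> by_cases h2 : 1 ∈ D <;> by_cases h3 : 2 ∈ D <;>
        by_cases h4 : 3 ∈ D <;> by_cases h5 : 4 ∈ D <;> by_cases h6 : 5 ∈ D <;>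
        simp_all [gF, aF, bF] <;> omega
    · have N0 := hNT m
      have N1 := hNT (m+1)
      have N2 := hNT (m+2)
      have N3 := hNT (m+3)
      have N4 := hNT (m+4)
      by_cases h1 : m ∈ D <;> by_cases h2 : m+1 ∈ D <;> by_cases h3 : m+2 ∈ D <;>
        by_cases h4 : m+3 ∈ D <;> by_cases h5 : m+4 ∈ D <;> by_cases h6 : m+5 ∈ D <;>
        by_cases h7 : m+6 ∈ D <;> simp_all [gF, aF, bF] <;> omega
  · exfalso
    -- j = i+4 : need gF (i+4) > gF i always
    have hb2 : gF D (i+4) ≥ i + 2 := by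
      rcases i with _ | _ | m
      · have N := hNT 1
        by_cases h1 : 3 ∈ D <;> by_cases h2 : 2 ∈ D <;> by_cases h3 : 1 ∈ D <;>
          simp_all [gF, aF, bF] <;> omega
      · have N := hNT 2
        by_cases h1 : 4 ∈ D <;> by_cases h2 : 3 ∈ D <;> by_cases h3 : 2 ∈ D <;>
          simp_all [gF, aF, bF] <;> omega
      · have N := hNT (m+3)
        by_cases h1 : m+5 ∈ D <;> by_cases h2 : m+4 ∈ D <;> by_cases h3 : m+3 ∈ D <;>
          simp_all [gF, aF, bF] <;> omega
    have hb3 : gF D i ≤ i + 2 := gF_le i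
    have haF := aF_le (D := D) i
    have hbF := bF_le (D := D) i
    have haF4 := aF_le (D := D) (i+4)
    have hbF4 := bF_le (D := D) (i+4)
    have ha2 : aF D i = 2 := by unfold gF at hle hb2 hb3; omega
    have hbv2 : bF D (i+4) = 2 := by unfold gF at hle hb2 hb3; omega
    have hmem1 : i ∈ D ∧ i + 1 ∈ D := by
      unfold aF at ha2
      split_ifs at ha2 with h1 h2 <;> first | exact ⟨h1, h2⟩ | omega
    have hmem2 : i + 2 ∈ D ∧ i + 3 ∈ D := by
      rw [show i+4 = i+2+2 by omega] at hbv2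
      simp only [bF] at hbv2
      split_ifs at hbv2 with h1 h2 <;>
        first
        | exact ⟨h2, by rwa [show i+2+1 = i+3 by omega] at h1⟩
        | omega
    exact hNT (i+1) ⟨hmem1.2, hmem2.1, hmem2.2⟩

lemma gF_desc : ∀ l, l ∈ D → gF D (l+1) < gF D l := by
  intro l hl
  rcases l with _ | _ | m
  · have N := hNT 0
    by_cases h2 : 1 ∈ D <;> by_cases h3 : 2 ∈ D <;> simp_all [gF, aF, bF] <;> omega
  · have N := hNT 0
    have N1 := hNT 1
    by_cases h1 : 0 ∈ D <;> by_cases h2 : 2 ∈ D <;> by_cases h3 : 3 ∈ D <;>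
      simp_all [gF, aF, bF] <;> omega
  · have N0 := hNT m
    have N1 := hNT (m+1)
    have N2 := hNT (m+2)
    by_cases h1 : m ∈ D <;> by_cases h2 : m+1 ∈ D <;> by_cases h3 : m+3 ∈ D <;>
      by_cases h4 : m+4 ∈ D <;> simp_all [gF, aF, bF] <;> omega

lemma gF_lt_n (hDn : ∀ i ∈ D, i + 1 < n) {i : ℕ} (hi : i < n) : gF D i < n := by
  have h1 : aF D i = 0 ∨ (i ∈ D ∧ aF D i ≤ 1) ∨ (i+1 ∈ D ∧ aF D i ≤ 2) := by
    unfold aF; split_ifs with ha hb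
    · exact Or.inr (Or.inr ⟨hb, le_refl _⟩)
    · exact Or.inr (Or.inl ⟨ha, le_refl _⟩)
    · exact Or.inl rfl
  unfold gF
  rcases h1 with h | ⟨hm, h⟩ | ⟨hm, h⟩
  · omega
  · have := hDn i hm; omega
  · have := hDn (i+1) hm; omega

theorem perm_of_D (hDn : ∀ i ∈ D, i + 1 < n) :
    ∃ π : Equiv.Perm (Fin n), Lay π ∧ (∀ l, DesAt π l ↔ l ∈ D) := by
  have hinj : Function.Injective (fun x : Fin n => (⟨gF D x, gF_lt_n hNT hDn x.2⟩ : Fin n)) := by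
    intro x y h
    simp only [Fin.mk.injEq] at h
    by_contra hne
    have hxy : (x : ℕ) ≠ (y : ℕ) := fun hc => hne (Fin.val_injective hc)
    rcases Nat.lt_or_ge (x : ℕ) (y : ℕ) with hlt | hge
    · rcases gF_key hNT x y hlt (le_of_eq h.symm) with ⟨_, _, he⟩ | ⟨_, _, _, he⟩ <;> omega
    · have hlt : (y : ℕ) < (x : ℕ) := by omega
      rcases gF_key hNT y x hlt (le_of_eq h) with ⟨_, _, he⟩ | ⟨_, _, _, he⟩ <;> omega
  have hbij := Finite.injective_iff_bijective.mp hinj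
  have hv : ∀ i, i < n → Vf (Equiv.ofBijective _ hbij) i = gF D i := by
    intro i hi
    rw [Vf_eq _ hi]
    rfl
  set π := Equiv.ofBijective _ hbij
  refine ⟨π, ?_, ?_⟩
  · intro i j hij hj hlt
    have hi : i < n := hij.trans hj
    rw [hv i hi, hv j hj] at hlt ⊢
    rcases gF_key hNT i j hij (le_of_lt hlt) with ⟨he, _, h2⟩ | ⟨he, _, _, h2⟩ <;> omega
  · intro l
    constructor
    · rintro ⟨hl1, hlt⟩
      rw [hv (l+1) hl1, hv l (by omega)] at hlt
      rcases gF_key hNT l (l+1) (by omega) (le_of_lt hlt) with ⟨_, hm, _⟩ | ⟨he, _, _, _⟩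
      · exact hm
      · omega
    · intro hl
      have h1 := hDn l hl
      refine ⟨h1, ?_⟩
      rw [hv (l+1) h1, hv l (by omega)]
      exact gF_desc hNT l hl

end Construct

theorem inv_char {π : Equiv.Perm (Fin n)} (hL : Lay π) (hT : NoTriple π) {i j : ℕ}
    (hij : i < j) (hj : j < n) :
    Vf π j < Vf π i ↔ (j = i+1 ∧ DesAt π i) ∨ (j = i+2 ∧ DesAt π i ∧ DesAt π (i+1)) := by
  constructor
  · intro hinv
    have hd := lay_L2 hL hij hj hinv
    rcases (by omega : j = i+1 ∨ j = i+2 ∨ i+3 ≤ j) with rfl | rfl | hge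
    · exact Or.inl ⟨rfl, hd i le_rfl (by omega)⟩
    · exact Or.inr ⟨rfl, hd i le_rfl (by omega), hd (i+1) (by omega) (by omega)⟩
    · exact absurd ⟨hd i le_rfl (by omega), hd (i+1) (by omega) (by omega),
        hd (i+2) (by omega) (by omega)⟩ (hT i)
  · rintro (⟨rfl, hd⟩ | ⟨rfl, hd1, hd2⟩)
    · exact hd.2
    · have e1 := des_step hL hd1
      have e2 := des_step hL hd2
      rw [show i+1+1 = i+2 by omega] at e2
      omega

open scoped Classical in
noncomputable def DsetF (π : Equiv.Perm (Fin n)) : Finset ℕ :=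
  (Finset.range n).filter (fun i => DesAt π i)

open scoped Classical in
noncomputable def PsetF (π : Equiv.Perm (Fin n)) : Finset ℕ :=
  (Finset.range n).filter (fun i => DesAt π i ∧ DesAt π (i+1))

theorem invNum_eq {π : Equiv.Perm (Fin n)} (hL : Lay π) (hT : NoTriple π) :
    invNum π = (DsetF π).card + (PsetF π).card := by
  classical
  set T1 : Finset (ℕ × ℕ) := (DsetF π).image (fun i => (i, i+1)) with hT1
  set T2 : Finset (ℕ × ℕ) := (PsetF π).image (fun i => (i, i+2)) with hT2
  have hdisj : Disjoint T1 T2 := by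
    rw [Finset.disjoint_left]
    rintro p hp hq
    obtain ⟨a, _, rfl⟩ := Finset.mem_image.mp hp
    obtain ⟨b, _, hb⟩ := Finset.mem_image.mp hq
    have h1 := congrArg Prod.fst hb
    have h2 := congrArg Prod.snd hb
    simp only at h1 h2
    omega
  have hcard : (T1 ∪ T2).card = (DsetF π).card + (PsetF π).card := by
    rw [Finset.card_union_of_disjoint hdisj, hT1, hT2,
      Finset.card_image_of_injective _ (show Function.Injective (fun i : ℕ => (i, i+1)) from
        fun a b h => by simpa using congrArg Prod.fst h),
      Finset.card_image_of_injective _ (show Function.Injective (fun i : ℕ => (i, i+2)) from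
        fun a b h => by simpa using congrArg Prod.fst h)]
  rw [← hcard]
  unfold invNum
  apply Finset.card_bij (fun (p : Fin n × Fin n) _ => ((p.1 : ℕ), (p.2 : ℕ)))
  · -- maps into
    rintro p hp
    rw [Finset.mem_filter] at hp
    obtain ⟨-, hlt, hinv⟩ := hp
    rw [Fin.lt_def] at hlt
    have hinv' : Vf π (p.2 : ℕ) < Vf π (p.1 : ℕ) := by
      rw [vf_apply, vf_apply]
      exact Fin.lt_def.mp hinv
    rcases (inv_char hL hT hlt p.2.is_lt).mp hinv' with ⟨he, hd⟩ | ⟨he, hd1, hd2⟩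
    · apply Finset.mem_union_left
      rw [hT1]
      exact Finset.mem_image.mpr ⟨(p.1 : ℕ), by
        simp only [DsetF, Finset.mem_filter, Finset.mem_range]
        exact ⟨p.1.is_lt, hd⟩, by rw [← he]⟩
    · apply Finset.mem_union_right
      rw [hT2]
      exact Finset.mem_image.mpr ⟨(p.1 : ℕ), by
        simp only [PsetF, Finset.mem_filter, Finset.mem_range]
        exact ⟨p.1.is_lt, hd1, hd2⟩, by rw [← he]⟩
  · -- injective
    rintro p hp q hq hpq
    have h1 := congrArg Prod.fst hpq
    have h2 := congrArg Prod.snd hpq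
    simp only at h1 h2
    exact Prod.ext (Fin.val_injective h1) (Fin.val_injective h2)
  · -- surjective
    rintro ⟨a, b⟩ hab
    rcases Finset.mem_union.mp hab with h | h
    · obtain ⟨c, hc, hcab⟩ := Finset.mem_image.mp h
      simp only [DsetF, Finset.mem_filter, Finset.mem_range] at hc
      obtain ⟨hcn, hd⟩ := hc
      have h1 := congrArg Prod.fst hcab
      have h2 := congrArg Prod.snd hcab
      simp only at h1 h2
      subst h1; subst h2
      refine ⟨(⟨c, hcn⟩, ⟨c+1, hd.1⟩), ?_, rfl⟩
      rw [Finset.mem_filter]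
      refine ⟨Finset.mem_univ _, by simp [Fin.lt_def], ?_⟩
      show π ⟨c+1, hd.1⟩ < π ⟨c, hcn⟩
      rw [Fin.lt_def, ← Vf_eq π hd.1, ← Vf_eq π hcn]
      exact hd.2
    · obtain ⟨c, hc, hcab⟩ := Finset.mem_image.mp h
      simp only [PsetF, Finset.mem_filter, Finset.mem_range] at hc
      obtain ⟨hcn, hd1, hd2⟩ := hc
      have h1 := congrArg Prod.fst hcab
      have h2 := congrArg Prod.snd hcab
      simp only at h1 h2
      subst h1; subst h2
      have hc2 : c + 2 < n := by have := hd2.1; omega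
      refine ⟨(⟨c, hcn⟩, ⟨c+2, hc2⟩), ?_, rfl⟩
      rw [Finset.mem_filter]
      refine ⟨Finset.mem_univ _, by simp [Fin.lt_def], ?_⟩
      show π ⟨c+2, hc2⟩ < π ⟨c, hcn⟩
      rw [Fin.lt_def, ← Vf_eq π hc2, ← Vf_eq π hcn]
      exact (inv_char hL hT (by omega : c < c + 2) hc2).mpr (Or.inr ⟨rfl, hd1, hd2⟩)

end Av

namespace Cnt

noncomputable def NACset (m j : ℕ) : Finset (Finset ℕ) :=
  (Finset.range m).powerset.filter (fun E => E.card = j ∧ ∀ i ∈ E, i+1 ∉ E)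

lemma mem_NACset {m j : ℕ} {E : Finset ℕ} :
    E ∈ NACset m j ↔ E ⊆ Finset.range m ∧ E.card = j ∧ ∀ i ∈ E, i+1 ∉ E := by
  simp [NACset, and_assoc]

lemma NACset_eq_singleton (m : ℕ) : NACset m 0 = {∅} := by
  ext E
  rw [mem_NACset, Finset.mem_singleton, Finset.card_eq_zero]
  constructor
  · rintro ⟨-, h, -⟩; exact h
  · rintro rfl
    exact ⟨Finset.empty_subset _, rfl, by simp⟩

lemma NACset_card_zero (m : ℕ) : (NACset m 0).card = 1 := by
  rw [NACset_eq_singleton]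
  exact Finset.card_singleton _

lemma NACset_zero (j : ℕ) : (NACset 0 j).card = if j = 0 then 1 else 0 := by
  by_cases hj : j = 0
  · subst hj
    rw [if_pos rfl]
    exact NACset_card_zero 0
  · rw [if_neg hj]
    rw [Finset.card_eq_zero]
    ext E
    simp only [mem_NACset, Finset.notMem_empty, iff_false]
    rintro ⟨hsub, hcard, -⟩
    rw [Finset.range_zero, Finset.subset_empty] at hsub
    subst hsub
    simp at hcard
    omega

lemma NACset_rec (m j : ℕ) :
    (NACset (m+1) (j+1)).card = (NACset m (j+1)).card + (NACset (m-1) j).card := by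
  classical
  have hsplit := Finset.card_filter_add_card_filter_not
    (s := NACset (m+1) (j+1)) (p := fun E => m ∈ E)
  have h1 : ((NACset (m+1) (j+1)).filter (fun E => m ∉ E)) = NACset m (j+1) := by
    ext E
    simp only [Finset.mem_filter, mem_NACset]
    constructor
    · rintro ⟨⟨hsub, hc, hadj⟩, hm⟩
      refine ⟨?_, hc, hadj⟩
      intro a ha
      have := hsub ha
      simp only [Finset.mem_range] at this ⊢
      rcases Nat.lt_succ_iff_lt_or_eq.mp this with h | h
      · exact h
      · exact absurd (h ▸ ha) hm
    · rintro ⟨hsub, hc, hadj⟩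
      refine ⟨⟨hsub.trans ?_, hc, hadj⟩, fun hm => by simpa using hsub hm⟩
      intro a ha
      simp only [Finset.mem_range] at ha ⊢
      omega
  have h2 : ((NACset (m+1) (j+1)).filter (fun E => m ∈ E)).card = (NACset (m-1) j).card := by
    apply Finset.card_nbij' (fun E => E.erase m) (fun E => insert m E)
    · rintro E hE
      beta_reduce
      rw [Finset.mem_coe, Finset.mem_filter, mem_NACset] at hE
      obtain ⟨⟨hsub, hc, hadj⟩, hm⟩ := hE
      rw [Finset.mem_coe, mem_NACset]
      refine ⟨?_, ?_, ?_⟩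
      · intro a ha
        rw [Finset.mem_erase] at ha
        obtain ⟨hne, haE⟩ := ha
        have h1 := hsub haE
        simp only [Finset.mem_range] at h1 ⊢
        -- a ≤ m, a ≠ m, and a ≠ m-1 (since a ∈ E and a+1 = m ∈ E would violate adj)
        rcases Nat.lt_or_ge a (m-1) with h | h
        · exact h
        · exfalso
          have ham : a < m := by omega
          have : a = m - 1 := by omega
          subst this
          have : m - 1 + 1 = m := by omega
          exact hadj _ haE (this ▸ hm)
      · rw [Finset.card_erase_of_mem hm, hc]
        omega
      · intro a ha
        rw [Finset.mem_erase] at ha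
        intro hcon
        rw [Finset.mem_erase] at hcon
        exact hadj a ha.2 hcon.2
    · rintro E hE
      beta_reduce
      rw [Finset.mem_coe, mem_NACset] at hE
      obtain ⟨hsub, hc, hadj⟩ := hE
      have hmE : m ∉ E := by
        intro h
        have := hsub h
        simp only [Finset.mem_range] at this
        omega
      rw [Finset.mem_coe, Finset.mem_filter, mem_NACset]
      refine ⟨⟨?_, ?_, ?_⟩, Finset.mem_insert_self m E⟩
      · intro a ha
        rcases Finset.mem_insert.mp ha with rfl | h
        · simp
        · have := hsub h
          simp only [Finset.mem_range] at this ⊢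
          omega
      · rw [Finset.card_insert_of_notMem hmE, hc]
      · intro a ha
        rcases Finset.mem_insert.mp ha with rfl | h
        · intro hcon
          rcases Finset.mem_insert.mp hcon with h' | h'
          · omega
          · have := hsub h'
            simp only [Finset.mem_range] at this
            omega
        · intro hcon
          rcases Finset.mem_insert.mp hcon with h' | h'
          · have := hsub h
            simp only [Finset.mem_range] at this
            omega
          · exact hadj a h h'
    · rintro E hE
      rw [Finset.mem_coe, Finset.mem_filter] at hE
      exact Finset.insert_erase hE.2
    · rintro E hE
      rw [Finset.mem_coe, mem_NACset] at hE
      apply Finset.erase_insert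
      intro h
      have := hE.1 h
      simp only [Finset.mem_range] at this
      omega
  have h1' := congrArg Finset.card h1
  omega

lemma NAC_card : ∀ m j, (NACset m j).card = Nat.choose (m+1-j) j := by
  intro m
  induction m using Nat.strong_induction_on with
  | _ m IH =>
  intro j
  match m, j with
  | 0, j =>
    rw [NACset_zero]
    by_cases hj : j = 0
    · subst hj; simp
    · rw [if_neg hj]
      have h1 : 1 - j = 0 := by omega
      rw [h1]
      exact (Nat.choose_eq_zero_of_lt (by omega)).symm
  | (m+1), 0 => simp [NACset_card_zero]
  | (m+1), (j+1) =>
    rw [NACset_rec, IH m (by omega) (j+1), IH (m-1) (by omega) j]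
    rcases le_or_gt (j+1) (m+1) with h | h
    · rcases Nat.eq_zero_or_pos m with rfl | hm
      · have hj : j = 0 := by omega
        subst hj
        simp
      · have e1 : m + 1 + 1 - (j+1) = (m - j) + 1 := by omega
        have e2 : m + 1 - (j + 1) = m - j := by omega
        have e3 : m - 1 + 1 - j = m - j := by omega
        rw [e1, e2, e3, Nat.choose_succ_succ]
        simp only [Nat.succ_eq_add_one]
        omega
    · have e1 : m + 1 + 1 - (j+1) = m + 1 - j := by omega
      rw [e1]
      have h1 : Nat.choose (m+1-j) (j+1) = 0 := Nat.choose_eq_zero_of_lt (by omega)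
      have h2 : Nat.choose (m+1-(j+1)) (j+1) = 0 := Nat.choose_eq_zero_of_lt (by omega)
      have h3 : Nat.choose (m-1+1-j) j = 0 := Nat.choose_eq_zero_of_lt (by omega)
      omega

noncomputable def TailSet (n k i : ℕ) : Finset (Finset ℕ) :=
  (Finset.Icc (i+3) (n-2)).powerset.filter (fun E => E.card = k-3 ∧ ∀ l ∈ E, l+1 ∉ E)

lemma mem_TailSet {n k i : ℕ} {E : Finset ℕ} :
    E ∈ TailSet n k i ↔ E ⊆ Finset.Icc (i+3) (n-2) ∧ E.card = k-3 ∧ ∀ l ∈ E, l+1 ∉ E := by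
  simp [TailSet, and_assoc]

lemma TailSet_card (n k i : ℕ) :
    (TailSet n k i).card = Nat.choose (n-4-i+1-(k-3)) (k-3) := by
  rw [← NAC_card]
  apply Finset.card_nbij' (fun E => E.image (fun a => a - (i+3)))
    (fun E => E.image (fun a => a + (i+3)))
  · intro E hE
    beta_reduce
    rw [Finset.mem_coe, mem_TailSet] at hE
    obtain ⟨hsub, hc, hadj⟩ := hE
    rw [Finset.mem_coe, mem_NACset]
    refine ⟨?_, ?_, ?_⟩
    · intro b hb
      obtain ⟨a, ha, rfl⟩ := Finset.mem_image.mp hb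
      have := Finset.mem_Icc.mp (hsub ha)
      simp only [Finset.mem_range]
      omega
    · rw [Finset.card_image_of_injOn, hc]
      intro x hx y hy hxy
      have hx' := Finset.mem_Icc.mp (hsub hx)
      have hy' := Finset.mem_Icc.mp (hsub hy)
      dsimp only at hxy
      omega
    · intro b hb hb1
      obtain ⟨a, ha, rfl⟩ := Finset.mem_image.mp hb
      obtain ⟨a', ha', he⟩ := Finset.mem_image.mp hb1
      have h1 := Finset.mem_Icc.mp (hsub ha)
      have h2 := Finset.mem_Icc.mp (hsub ha')
      have : a' = a + 1 := by omega
      exact hadj a ha (this ▸ ha')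
  · intro E hE
    beta_reduce
    rw [Finset.mem_coe, mem_NACset] at hE
    obtain ⟨hsub, hc, hadj⟩ := hE
    rw [Finset.mem_coe, mem_TailSet]
    refine ⟨?_, ?_, ?_⟩
    · intro b hb
      obtain ⟨a, ha, rfl⟩ := Finset.mem_image.mp hb
      have := Finset.mem_range.mp (hsub ha)
      rw [Finset.mem_Icc]
      omega
    · rw [Finset.card_image_of_injective _ (add_left_injective (i+3)), hc]
    · intro b hb hb1
      obtain ⟨a, ha, rfl⟩ := Finset.mem_image.mp hb
      obtain ⟨a', ha', he⟩ := Finset.mem_image.mp hb1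
      have : a' = a + 1 := by omega
      exact hadj a ha (this ▸ ha')
  · intro E hE
    beta_reduce
    rw [Finset.mem_coe, mem_TailSet] at hE
    rw [Finset.image_image]
    have : Finset.image (fun a => a - (i+3) + (i+3)) E = Finset.image id E := by
      apply Finset.image_congr
      intro a ha
      have := Finset.mem_Icc.mp (hE.1 ha)
      simp only [id]
      omega
    rw [show ((fun a => a + (i+3)) ∘ (fun a => a - (i+3))) = fun a => a - (i+3) + (i+3) from rfl,
      this, Finset.image_id]
  · intro E hE
    beta_reduce
    rw [Finset.image_image]
    have : Finset.image (fun a => a + (i+3) - (i+3)) E = Finset.image id E := by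
      apply Finset.image_congr
      intro a ha
      simp only [id]
      omega
    rw [show ((fun a => a - (i+3)) ∘ (fun a => a + (i+3))) = fun a => a + (i+3) - (i+3) from rfl,
      this, Finset.image_id]

lemma sum_tail_zero (n k : ℕ) (hk : 3 ≤ k) (hn : n < k) :
    (∑ i ∈ Finset.range (n-2), Nat.choose (n-4-i+1-(k-3)) (k-3)) = 0 := by
  apply Finset.sum_eq_zero
  intro i hi
  rw [Finset.mem_range] at hi
  have e : n-4-i+1-(k-3) = 0 := by omega
  rw [e]
  exact Nat.choose_eq_zero_of_lt (by omega)

lemma sum_tail : ∀ n k : ℕ, 3 ≤ k → k ≤ n →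
    (∑ i ∈ Finset.range (n-2), Nat.choose (n-4-i+1-(k-3)) (k-3)) =
      Nat.choose (n-k+1) (k-2) := by
  intro n
  induction n with
  | zero => intro k hk hn; omega
  | succ n IH =>
    intro k hk hn
    rcases eq_or_lt_of_le hn with he | hlt
    · -- k = n + 1 : base case
      by_cases hk3 : k = 3
      · subst hk3
        have hn2 : n = 2 := by omega
        subst hn2
        decide
      · have hsum : (∑ i ∈ Finset.range (n+1-2), Nat.choose (n+1-4-i+1-(k-3)) (k-3)) = 0 := by
          apply Finset.sum_eq_zero
          intro i hi
          rw [Finset.mem_range] at hi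
          have e : n+1-4-i+1-(k-3) = 0 := by omega
          rw [e]
          exact Nat.choose_eq_zero_of_lt (by omega)
        rw [hsum]
        have e2 : n+1-k+1 = 1 := by omega
        rw [e2]
        exact (Nat.choose_eq_zero_of_lt (by omega)).symm
    · have hkn : k ≤ n := by omega
      have hn2 : 3 ≤ n := by omega
      have e0 : n+1-2 = (n-2)+1 := by omega
      rw [e0, Finset.sum_range_succ']
      have e1 : ∀ i : ℕ, n+1-4-(i+1)+1-(k-3) = n-4-i+1-(k-3) := by intro i; omega
      rw [Finset.sum_congr rfl (fun i _ => by rw [e1 i])]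
      rw [IH k hk hkn]
      have e2 : n+1-4-0+1-(k-3) = n-k+1 := by omega
      rw [e2]
      have e3 : n+1-k+1 = (n-k+1)+1 := by omega
      have e4 : k-2 = (k-3)+1 := by omega
      rw [e3, e4]
      have hps := Nat.choose_succ_succ (n-k+1) (k-3)
      simp only [Nat.succ_eq_add_one] at hps
      omega

noncomputable def Tgt (n k : ℕ) : Finset (Finset ℕ) :=
  (Finset.range (n-1)).powerset.filter (fun D =>
    (∀ l, ¬ (l ∈ D ∧ l+1 ∈ D ∧ l+2 ∈ D)) ∧
    (∀ i j, i < j → j ∈ D → j+1 ∈ D → i ∉ D) ∧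
    D.card + (D.filter (fun i => i+1 ∈ D)).card = k)

lemma mem_Tgt {n k : ℕ} {D : Finset ℕ} :
    D ∈ Tgt n k ↔ D ⊆ Finset.range (n-1) ∧
      (∀ l, ¬ (l ∈ D ∧ l+1 ∈ D ∧ l+2 ∈ D)) ∧
      (∀ i j, i < j → j ∈ D → j+1 ∈ D → i ∉ D) ∧
      D.card + (D.filter (fun i => i+1 ∈ D)).card = k := by
  simp [Tgt, and_assoc]

lemma TgtA_eq (n k : ℕ) :
    (Tgt n k).filter (fun D => ¬ ∃ i, i ∈ D ∧ i+1 ∈ D) = NACset (n-1) k := by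
  ext D
  rw [Finset.mem_filter, mem_Tgt, mem_NACset]
  constructor
  · rintro ⟨⟨hsub, hNT, hPF, hw⟩, hnp⟩
    push_neg at hnp
    have hfe : D.filter (fun i => i+1 ∈ D) = ∅ :=
      Finset.filter_eq_empty_iff.mpr (fun i hi => hnp i hi)
    rw [hfe] at hw
    simp only [Finset.card_empty, Nat.add_zero] at hw
    exact ⟨hsub, hw, hnp⟩
  · rintro ⟨hsub, hc, hadj⟩
    have hfe : D.filter (fun i => i+1 ∈ D) = ∅ :=
      Finset.filter_eq_empty_iff.mpr (fun i hi => hadj i hi)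
    refine ⟨⟨hsub, ?_, ?_, by rw [hfe]; simp [hc]⟩, ?_⟩
    · rintro l ⟨h1, h2, h3⟩; exact hadj l h1 h2
    · intro i j hij hj hj1 hi; exact hadj j hj hj1
    · rintro ⟨i, h1, h2⟩; exact hadj i h1 h2

lemma Tgt_pair_struct {n k : ℕ} {D : Finset ℕ} (hD : D ∈ Tgt n k)
    (hp : ∃ i, i ∈ D ∧ i+1 ∈ D) :
    ∃ m, D.min.untopD 0 = m ∧ m ∈ D ∧ m+1 ∈ D ∧ m+1 < n-1 ∧
      (∀ a ∈ D, a = m ∨ a = m+1 ∨ m+3 ≤ a) ∧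
      D.filter (fun i => i+1 ∈ D) = {m} ∧ D.card + 1 = k := by
  rw [mem_Tgt] at hD
  obtain ⟨hsub, hNT, hPF, hw⟩ := hD
  obtain ⟨j0, hj0, hj1⟩ := hp
  have hne : D.Nonempty := ⟨j0, hj0⟩
  set m := D.min' hne with hm_def
  have hmin : D.min.untopD 0 = m := by
    rw [← Finset.coe_min' hne]
    rfl
  have hmmem : m ∈ D := Finset.min'_mem D hne
  have hm_eq : m = j0 := by
    rcases eq_or_lt_of_le (Finset.min'_le D j0 hj0) with h | h
    · exact h
    · exact absurd hmmem (hPF m j0 h hj0 hj1)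
  have hm1 : m + 1 ∈ D := hm_eq ▸ hj1
  have hm1n : m + 1 < n - 1 := by
    have := hsub hm1
    simpa using this
  have hm2 : m + 2 ∉ D := fun h => hNT m ⟨hmmem, hm1, h⟩
  have hstruct : ∀ a ∈ D, a = m ∨ a = m+1 ∨ m+3 ≤ a := by
    intro a ha
    have h1 := Finset.min'_le D a ha
    rw [← hm_def] at h1
    by_cases h2 : a = m+2
    · exact absurd (h2 ▸ ha) hm2
    · omega
  have hfilt : D.filter (fun i => i+1 ∈ D) = {m} := by
    ext i
    rw [Finset.mem_filter, Finset.mem_singleton]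
    constructor
    · rintro ⟨hi, hi1⟩
      rcases hstruct i hi with h | h | h
      · exact h
      · exfalso
        apply hm2
        rw [← show i + 1 = m + 2 by omega]
        exact hi1
      · exact absurd hmmem (hPF m i (by omega) hi hi1)
    · rintro rfl
      exact ⟨hmmem, hm1⟩
  rw [hfilt] at hw
  simp only [Finset.card_singleton] at hw
  exact ⟨m, hmin, hmmem, hm1, hm1n, hstruct, hfilt, hw⟩

lemma TgtB_card (n k : ℕ) (hk : 3 ≤ k) :
    ((Tgt n k).filter (fun D => ∃ i, i ∈ D ∧ i+1 ∈ D)).card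
      = ∑ i ∈ Finset.range (n-2), Nat.choose (n-4-i+1-(k-3)) (k-3) := by
  have hbij : ((Tgt n k).filter (fun D => ∃ i, i ∈ D ∧ i+1 ∈ D)).card
      = ((Finset.range (n-2)).sigma (fun i => TailSet n k i)).card := by
    apply Finset.card_nbij'
      (fun D => ⟨D.min.untopD 0, (D.erase (D.min.untopD 0)).erase (D.min.untopD 0 + 1)⟩)
      (fun p => insert p.1 (insert (p.1+1) p.2))
    · intro D hD
      rw [Finset.mem_coe, Finset.mem_filter] at hD
      obtain ⟨hT, hp⟩ := hD
      obtain ⟨m, hmin, hm, hm1, hmn, hstruct, hfilt, hw⟩ := Tgt_pair_struct hT hp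
      rw [mem_Tgt] at hT
      obtain ⟨hsub, hNT, hPF, -⟩ := hT
      rw [Finset.mem_coe, Finset.mem_sigma]
      dsimp only
      rw [hmin]
      constructor
      · rw [Finset.mem_range]; omega
      · rw [mem_TailSet]
        refine ⟨?_, ?_, ?_⟩
        · intro a ha
          simp only [Finset.mem_erase] at ha
          obtain ⟨h1, h2, h3⟩ := ha
          have h4 := Finset.mem_range.mp (hsub h3)
          rcases hstruct a h3 with h | h | h <;> rw [Finset.mem_Icc] <;> omega
        · rw [Finset.card_erase_of_mem (Finset.mem_erase.mpr ⟨by omega, hm1⟩),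
            Finset.card_erase_of_mem hm]
          omega
        · intro a ha hcon
          simp only [Finset.mem_erase] at ha hcon
          obtain ⟨h1, h2, h3⟩ := ha
          obtain ⟨h4, h5, h6⟩ := hcon
          have h7 : m + 3 ≤ a := by
            rcases hstruct a h3 with h | h | h <;> omega
          exact (hPF m a (by omega) h3 h6) hm
    · rintro ⟨i, E⟩ hp
      rw [Finset.mem_coe, Finset.mem_sigma] at hp
      obtain ⟨hi, hE⟩ := hp
      dsimp only at hi hE
      rw [Finset.mem_range] at hi
      rw [mem_TailSet] at hE
      obtain ⟨hEsub, hEcard, hEadj⟩ := hE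
      have hEge : ∀ a ∈ E, i+3 ≤ a ∧ a ≤ n-2 := fun a ha => Finset.mem_Icc.mp (hEsub ha)
      have hiE : i ∉ E := fun h => by have := hEge i h; omega
      have hi1E : i+1 ∉ E := fun h => by have := hEge (i+1) h; omega
      have hi2E : i+2 ∉ E := fun h => by have := hEge (i+2) h; omega
      dsimp only
      rw [Finset.mem_coe, Finset.mem_filter]
      constructor
      · rw [mem_Tgt]
        refine ⟨?_, ?_, ?_, ?_⟩
        · intro a ha
          simp only [Finset.mem_insert] at ha
          rw [Finset.mem_range]
          rcases ha with rfl | rfl | h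
          · omega
          · omega
          · have := hEge a h; omega
        · rintro l ⟨h1, h2, h3⟩
          simp only [Finset.mem_insert] at h1 h2 h3
          rcases h1 with rfl | rfl | hl
          · rcases h3 with h3 | h3 | h3
            · omega
            · omega
            · exact hi2E h3
          · rcases h2 with h2 | h2 | h2
            · omega
            · omega
            · exact hi2E h2
          · have hb := hEge l hl
            rcases h2 with h2 | h2 | h2
            · omega
            · omega
            · exact hEadj l hl h2
        · intro a b hab hb hb1 ha
          simp only [Finset.mem_insert] at hb hb1 ha
          rcases hb with rfl | rfl | hb
          · rcases ha with h | h | h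
            · omega
            · omega
            · have := hEge a h; omega
          · rcases hb1 with h | h | h
            · omega
            · omega
            · exact hi2E h
          · have hbb := hEge b hb
            rcases hb1 with h | h | h
            · omega
            · omega
            · exact hEadj b hb h
        · have hcard : (insert i (insert (i+1) E)).card = E.card + 2 := by
            rw [Finset.card_insert_of_notMem (by
              simp only [Finset.mem_insert]
              push_neg
              exact ⟨by omega, hiE⟩), Finset.card_insert_of_notMem hi1E]
          have hfilt2 : (insert i (insert (i+1) E)).filter
              (fun a => a+1 ∈ insert i (insert (i+1) E)) = {i} := by
            ext a
            rw [Finset.mem_filter, Finset.mem_singleton]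
            constructor
            · rintro ⟨h1, h2⟩
              simp only [Finset.mem_insert] at h1 h2
              rcases h1 with rfl | rfl | h1
              · rfl
              · rcases h2 with h | h | h
                · omega
                · omega
                · exact absurd h hi2E
              · have := hEge a h1
                rcases h2 with h | h | h
                · omega
                · omega
                · exact absurd h (hEadj a h1)
            · rintro rfl
              exact ⟨Finset.mem_insert_self _ _, by simp⟩
          rw [hfilt2, hcard]
          simp only [Finset.card_singleton]
          omega
      · exact ⟨i, Finset.mem_insert_self _ _, by simp⟩
    · intro D hD
      rw [Finset.mem_coe, Finset.mem_filter] at hD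
      obtain ⟨hT, hp⟩ := hD
      obtain ⟨m, hmin, hm, hm1, -, -, -, -⟩ := Tgt_pair_struct hT hp
      dsimp only
      rw [hmin]
      rw [Finset.insert_erase (Finset.mem_erase.mpr ⟨by omega, hm1⟩), Finset.insert_erase hm]
    · rintro ⟨i, E⟩ hp
      rw [Finset.mem_coe, Finset.mem_sigma] at hp
      obtain ⟨hi, hE⟩ := hp
      dsimp only at hi hE
      rw [Finset.mem_range] at hi
      rw [mem_TailSet] at hE
      obtain ⟨hEsub, -, -⟩ := hE
      have hEge : ∀ a ∈ E, i+3 ≤ a := fun a ha => (Finset.mem_Icc.mp (hEsub ha)).1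
      have hiE : i ∉ E := fun h => by have := hEge i h; omega
      have hi1E : i+1 ∉ E := fun h => by have := hEge (i+1) h; omega
      dsimp only
      have hmin : (insert i (insert (i+1) E)).min.untopD 0 = i := by
        have hne : (insert i (insert (i+1) E)).Nonempty := ⟨i, Finset.mem_insert_self _ _⟩
        have h1 : (insert i (insert (i+1) E)).min' hne = i := by
          apply le_antisymm
          · exact Finset.min'_le _ _ (Finset.mem_insert_self _ _)
          · apply Finset.le_min'
            intro y hy
            simp only [Finset.mem_insert] at hy
            rcases hy with rfl | rfl | hy
            · omega
            · omega
            · have := hEge y hy; omega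
        rw [← Finset.coe_min' hne, h1]
        rfl
      rw [hmin]
      have h2 : ((insert i (insert (i+1) E)).erase i).erase (i+1) = E := by
        rw [Finset.erase_insert (by
          simp only [Finset.mem_insert]
          push_neg
          exact ⟨by omega, hiE⟩), Finset.erase_insert hi1E]
      rw [h2]
  rw [hbij, Finset.card_sigma]
  exact Finset.sum_congr rfl (fun i _ => TailSet_card n k i)

lemma Tgt_card (n k : ℕ) (hk : 3 ≤ k) (hn : 1 ≤ n) :
    (Tgt n k).card =
      Nat.choose (n-k) k + ∑ i ∈ Finset.range (n-2), Nat.choose (n-4-i+1-(k-3)) (k-3) := by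
  classical
  have hsplit := Finset.card_filter_add_card_filter_not
    (s := Tgt n k) (p := fun D => ∃ i, i ∈ D ∧ i+1 ∈ D)
  have hA : ((Tgt n k).filter (fun D => ¬ ∃ i, i ∈ D ∧ i+1 ∈ D)).card = Nat.choose (n-k) k := by
    rw [TgtA_eq, NAC_card]
    congr 2
    omega
  have hB := TgtB_card n k hk
  omega

end Cnt


namespace Av

variable {n : ℕ}

lemma mem_DsetF {π : Equiv.Perm (Fin n)} {l : ℕ} : l ∈ DsetF π ↔ DesAt π l := by
  simp only [DsetF, Finset.mem_filter, Finset.mem_range]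
  constructor
  · rintro ⟨-, h⟩; exact h
  · intro h; exact ⟨by have := h.1; omega, h⟩

lemma PsetF_eq (π : Equiv.Perm (Fin n)) :
    PsetF π = (DsetF π).filter (fun i => i+1 ∈ DsetF π) := by
  ext l
  simp only [PsetF, DsetF, Finset.mem_filter, Finset.mem_range]
  constructor
  · rintro ⟨h1, h2, h3⟩
    exact ⟨⟨h1, h2⟩, by have := h3.1; omega, h3⟩
  · rintro ⟨⟨h1, h2⟩, -, h3⟩
    exact ⟨h1, h2, h3⟩

end Av

lemma C_cast (a b : ℕ) : _root_.C (a : ℤ) (b : ℤ) = (Nat.choose a b : ℤ) := by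
  unfold _root_.C
  split_ifs with h
  · simp
  · push_neg at h
    have hba : (a : ℤ) < b := h (by positivity)
    rw [Nat.choose_eq_zero_of_lt (by exact_mod_cast hba)]
    simp

theorem stmt10 (n k : ℕ) (hk : 3 ≤ k) (hn : 1 ≤ n) :
    ({π : Equiv.Perm (Fin n) | AvoidsAll π [[2,3,1],[3,1,2],[4,3,2,1],[2,1,5,4,3]] ∧ invNum π = k}.ncard : ℤ) =
      C ((n : ℤ) - k) k + C ((n : ℤ) - k + 1) ((k : ℤ) - 2) := by
  classical
  have hset : {π : Equiv.Perm (Fin n) | AvoidsAll π [[2,3,1],[3,1,2],[4,3,2,1],[2,1,5,4,3]] ∧ invNum π = k}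
      = ↑((Finset.univ : Finset (Equiv.Perm (Fin n))).filter
          (fun π => AvoidsAll π [[2,3,1],[3,1,2],[4,3,2,1],[2,1,5,4,3]] ∧ invNum π = k)) := by
    ext π
    simp
  rw [hset, Set.ncard_coe_finset]
  have hcard : ((Finset.univ : Finset (Equiv.Perm (Fin n))).filter
      (fun π => AvoidsAll π [[2,3,1],[3,1,2],[4,3,2,1],[2,1,5,4,3]] ∧ invNum π = k)).card
      = (Cnt.Tgt n k).card := by
    apply Finset.card_bij (fun π _ => Av.DsetF π)
    · intro π hπ
      rw [Finset.mem_filter] at hπ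
      obtain ⟨-, havoid, hinv⟩ := hπ
      obtain ⟨hL, hN⟩ := (Av.avoidsAll_iff π).mp havoid
      have hT := Av.npb_noTriple hN
      rw [Cnt.mem_Tgt]
      refine ⟨?_, ?_, ?_, ?_⟩
      · intro l hl
        rw [Av.mem_DsetF] at hl
        rw [Finset.mem_range]
        have := hl.1
        omega
      · rintro l ⟨h1, h2, h3⟩
        rw [Av.mem_DsetF] at h1 h2 h3
        exact hT l ⟨h1, h2, h3⟩
      · intro i j hij hj hj1 hi
        rw [Av.mem_DsetF] at hj hj1 hi
        exact (hN i j hij hj hj1) hi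
      · rw [← Av.PsetF_eq, ← Av.invNum_eq hL hT]
        exact hinv
    · intro π hπ σ hσ h
      rw [Finset.mem_filter] at hπ hσ
      obtain ⟨hLπ, hNπ⟩ := (Av.avoidsAll_iff π).mp hπ.2.1
      obtain ⟨hLσ, hNσ⟩ := (Av.avoidsAll_iff σ).mp hσ.2.1
      exact Av.perm_determined hLπ (Av.npb_noTriple hNπ) hLσ (Av.npb_noTriple hNσ)
        (fun l => by rw [← Av.mem_DsetF, ← Av.mem_DsetF, h])
    · intro D hD
      rw [Cnt.mem_Tgt] at hD
      obtain ⟨hsub, hNT, hPF, hw⟩ := hD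
      have hDn : ∀ i ∈ D, i+1 < n := by
        intro i hi
        have := Finset.mem_range.mp (hsub hi)
        omega
      obtain ⟨π, hL, hdes⟩ := Av.perm_of_D hNT hDn
      have hT' : Av.NoTriple π := fun l hx =>
        hNT l ⟨(hdes l).mp hx.1, (hdes _).mp hx.2.1, (hdes _).mp hx.2.2⟩
      have hNPB : Av.NPB π := fun i j hij hdj hdj1 hdi =>
        (hPF i j hij ((hdes j).mp hdj) ((hdes _).mp hdj1)) ((hdes i).mp hdi)
      have hDeq : Av.DsetF π = D := by
        ext l
        rw [Av.mem_DsetF, hdes]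
      refine ⟨π, ?_, hDeq⟩
      rw [Finset.mem_filter]
      refine ⟨Finset.mem_univ _, (Av.avoidsAll_iff π).mpr ⟨hL, hNPB⟩, ?_⟩
      rw [Av.invNum_eq hL hT', Av.PsetF_eq, hDeq]
      exact hw
  rw [hcard, Cnt.Tgt_card n k hk hn]
  rcases le_or_gt k n with hcase | hcase
  · rw [Cnt.sum_tail n k hk hcase]
    have e1 : (n : ℤ) - k = ((n - k : ℕ) : ℤ) := by
      push_cast [Nat.cast_sub hcase]
      ring
    have e2 : (n : ℤ) - k + 1 = ((n - k + 1 : ℕ) : ℤ) := by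
      push_cast [Nat.cast_sub hcase]
      ring
    have e3 : (k : ℤ) - 2 = ((k - 2 : ℕ) : ℤ) := by
      push_cast [Nat.cast_sub (show 2 ≤ k by omega)]
      ring
    rw [e1, e3]
    rw [show ((n - k : ℕ) : ℤ) + 1 = ((n - k + 1 : ℕ) : ℤ) by push_cast; ring]
    rw [C_cast, C_cast]
    push_cast
    ring
  · rw [Cnt.sum_tail_zero n k hk hcase]
    have h1 : n - k = 0 := by omega
    rw [h1, Nat.choose_eq_zero_of_lt (by omega)]
    have h2 : _root_.C ((n : ℤ) - k) k = 0 := by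
      unfold _root_.C
      rw [if_neg]
      push_neg
      intro h
      omega
    have h3 : _root_.C ((n : ℤ) - k + 1) ((k : ℤ) - 2) = 0 := by
      unfold _root_.C
      rw [if_neg]
      push_neg
      intro h
      omega
    rw [h2, h3]
    simp
end

section
/- For n ≥ 1 and k ≥ 0, the number of permutations of length n in Av(312, 321, 1342) with exactly k inversions equals the sum over ℓ from 1 to n of C(n-k-1, k-ℓ+1). -/
open Finset MvPolynomial
open scoped Classical

/-- sparse subsets (no two consecutive) of `range m` with `j` elements -/
def Sp (m j : ℕ) : Finset (Finset ℕ) :=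
  ((Finset.range m).powerset).filter (fun T => (∀ x ∈ T, x + 1 ∉ T) ∧ T.card = j)

lemma mem_Sp {m j : ℕ} {T : Finset ℕ} :
    T ∈ Sp m j ↔ T ⊆ Finset.range m ∧ (∀ x ∈ T, x + 1 ∉ T) ∧ T.card = j := by
  simp [Sp, and_assoc]

lemma Sp_zero (m : ℕ) : Sp m 0 = {∅} := by
  ext T
  simp only [mem_Sp, Finset.card_eq_zero, Finset.mem_singleton]
  constructor
  · rintro ⟨-, -, h⟩; exact h
  · rintro rfl; simp

lemma Sp_card (m j : ℕ) : (Sp m j).card = Nat.choose (m + 1 - j) j := by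
  induction m using Nat.strong_induction_on generalizing j with
  | _ m ih =>
  rcases j with _ | j
  · simp [Sp_zero]
  rcases m with _ | _ | m
  · -- m = 0
    {
      have : Sp 0 (j+1) = ∅ := by
        ext T
        simp only [mem_Sp, Finset.notMem_empty, iff_false]
        rintro ⟨hs, -, hc⟩
        simp only [Finset.range_zero, Finset.subset_empty] at hs
        simp [hs] at hc
      rw [this]
      have h0 : (0 + 1 - (j+1)) < j + 1 := by omega
      simp [Nat.choose_eq_zero_of_lt h0] }
  · -- m = 1
    rcases j with _ | j
    · 
        have : Sp 1 1 = {{0}} := by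
          ext T
          simp only [mem_Sp, Finset.mem_singleton]
          constructor
          · rintro ⟨hs, -, hc⟩
            rw [Finset.card_eq_one] at hc
            obtain ⟨a, rfl⟩ := hc
            have := hs (Finset.mem_singleton_self a)
            simp only [Finset.mem_range] at this
            interval_cases a
            rfl
          · rintro rfl
            refine ⟨by simp, by simp, by simp⟩
        rw [this]; simp
    · 
        have : Sp 1 (j+2) = ∅ := by
          ext T
          simp only [mem_Sp, Finset.notMem_empty, iff_false]
          rintro ⟨hs, -, hc⟩
          have := Finset.card_le_card hs
          simp [hc] at this
        rw [this]
        have h0 : (1 + 1 - (j+1+1)) < j + 1 + 1 := by omega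
        simp [Nat.choose_eq_zero_of_lt h0]
  · -- m + 2 case
      -- split on whether m+1 ∈ T
      have hsplit : (Sp (m+2) (j+1)).card
          = ((Sp (m+2) (j+1)).filter (fun T => m+1 ∈ T)).card
            + ((Sp (m+2) (j+1)).filter (fun T => m+1 ∉ T)).card := by
        rw [Finset.card_filter_add_card_filter_not]
      have h1 : (Sp (m+2) (j+1)).filter (fun T => m+1 ∉ T) = Sp (m+1) (j+1) := by
        ext T
        simp only [Finset.mem_filter, mem_Sp]
        constructor
        · rintro ⟨⟨hs, hsp, hc⟩, hnm⟩
          refine ⟨?_, hsp, hc⟩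
          intro x hx
          have := hs hx
          simp only [Finset.mem_range] at this ⊢
          rcases Nat.lt_or_ge x (m+1) with h | h
          · exact h
          · exfalso; have : x = m+1 := by omega
            exact hnm (this ▸ hx)
        · rintro ⟨hs, hsp, hc⟩
          refine ⟨⟨hs.trans (by intro x; simp only [Finset.mem_range]; omega), hsp, hc⟩, ?_⟩
          intro hm
          have := hs hm
          simp at this
      have h2 : ((Sp (m+2) (j+1)).filter (fun T => m+1 ∈ T)).card = (Sp m j).card := by
        refine Finset.card_bij' (fun T _ => T.erase (m+1))
          (fun T _ => insert (m+1) T) ?_ ?_ ?_ ?_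
        · intro T hT
          simp only [Finset.mem_filter, mem_Sp] at hT
          obtain ⟨⟨hs, hsp, hc⟩, hm⟩ := hT
          rw [mem_Sp]
          refine ⟨?_, ?_, ?_⟩
          · intro x hx
            simp only [Finset.mem_erase] at hx
            obtain ⟨hne, hxT⟩ := hx
            have hlt := hs hxT
            simp only [Finset.mem_range] at hlt ⊢
            -- x ≠ m+1, x < m+2; also x ≠ m since m ∈ T would contradict sparse with m+1
            rcases Nat.lt_or_ge x m with h | h
            · exact h
            · exfalso
              have hxm : x = m := by omega
              subst hxm
              exact hsp x hxT hm
          · intro x hx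
            simp only [Finset.mem_erase] at hx ⊢
            intro hx1
            exact hsp x hx.2 hx1.2
          · rw [Finset.card_erase_of_mem hm, hc]
            omega
        · intro T hT
          rw [mem_Sp] at hT
          obtain ⟨hs, hsp, hc⟩ := hT
          simp only [Finset.mem_filter, mem_Sp]
          have hm : m + 1 ∉ T := by
            intro h; have := hs h; simp at this
          refine ⟨⟨?_, ?_, ?_⟩, Finset.mem_insert_self _ _⟩
          · intro x hx
            simp only [Finset.mem_insert] at hx
            rcases hx with rfl | hx
            · simp
            · have := hs hx; simp only [Finset.mem_range] at this ⊢; omega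
          · intro x hx
            simp only [Finset.mem_insert] at hx ⊢
            rcases hx with rfl | hx
            · push_neg
              constructor
              · omega
              · intro h; have := hs h; simp only [Finset.mem_range] at this; omega
            · push_neg
              constructor
              · intro h
                -- x+1 = m+1 means x = m ∈ T, but then x < m from range m: contradiction
                have := hs hx; simp only [Finset.mem_range] at this; omega
              · exact hsp x hx
          · rw [Finset.card_insert_of_notMem hm, hc]
        · intro T hT
          simp only [Finset.mem_filter] at hT
          exact Finset.insert_erase hT.2
        · intro T hT
          rw [mem_Sp] at hT
          have hm : m + 1 ∉ T := by
            intro h; have := hT.1 h; simp at this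
          exact Finset.erase_insert hm
      rw [hsplit, h1, h2, ih (m+1) (by omega) (j+1), ih m (by omega) j]
      -- choose arithmetic: (m+3-(j+1)) choose (j+1) = (m+2-(j+1)) choose (j+1) + (m+1-j) choose j
      rcases Nat.lt_or_ge (m+1) j with h | h
      · -- j ≥ m+2 : all terms zero
        rw [Nat.choose_eq_zero_of_lt (by omega), Nat.choose_eq_zero_of_lt (by omega),
          Nat.choose_eq_zero_of_lt (by omega)]
      · have e1 : m + 2 + 1 - (j+1) = (m + 1 - j) + 1 := by omega
        have e2 : m + 1 + 1 - (j+1) = m + 1 - j := by omega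
        rw [e1, e2, Nat.choose_succ_succ]

-- Stage 2: V n k
noncomputable def Vk (n k : ℕ) : Finset (Finset ℕ) :=
  ((Finset.range (n-1)).powerset).filter
    (fun S => (∀ i : ℕ, i + 1 ∈ S → i + 2 ∈ S → i ∈ S) ∧ S.card = k)

lemma mem_Vk {n k : ℕ} {S : Finset ℕ} :
    S ∈ Vk n k ↔ S ⊆ Finset.range (n-1) ∧ (∀ i : ℕ, i + 1 ∈ S → i + 2 ∈ S → i ∈ S)
      ∧ S.card = k := by
  simp [Vk, and_assoc]

/-- downward closure: consecutive pair pulls down everything -/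
lemma cond_down {S : Finset ℕ} (hc : ∀ i : ℕ, i + 1 ∈ S → i + 2 ∈ S → i ∈ S)
    {x : ℕ} (hx : x ∈ S) (hx1 : x + 1 ∈ S) : ∀ p, p ≤ x → p ∈ S := by
  have key : ∀ d : ℕ, d ≤ x → (x - d ∈ S ∧ x - d + 1 ∈ S) := by
    intro d
    induction d with
    | zero => intro _; simpa using ⟨hx, hx1⟩
    | succ d ihd =>
      intro hd
      obtain ⟨h1, h2⟩ := ihd (by omega)
      have e1 : x - d = (x - (d+1)) + 1 := by omega
      have e2 : x - d + 1 = (x - (d+1)) + 2 := by omega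
      have h1' := h1
      rw [e1] at h1'
      rw [e2] at h2
      exact ⟨hc _ h1' h2, e1 ▸ h1⟩
  intro p hp
  have := (key (x - p) (by omega)).1
  have e : x - (x - p) = p := by omega
  rwa [e] at this
/-- the least element not in S -/
noncomputable def firstGap (S : Finset ℕ) : ℕ := Nat.find (Finset.exists_notMem S)

lemma firstGap_not_mem (S : Finset ℕ) : firstGap S ∉ S := Nat.find_spec (Finset.exists_notMem S)

lemma firstGap_lt_mem (S : Finset ℕ) {p : ℕ} (hp : p < firstGap S) : p ∈ S := by
  have := Nat.find_min (Finset.exists_notMem S) hp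
  simpa using this

lemma firstGap_eq {S : Finset ℕ} {a : ℕ} (h1 : a ∉ S) (h2 : ∀ p < a, p ∈ S) :
    firstGap S = a := by
  have hle : firstGap S ≤ a := Nat.find_min' _ h1
  rcases Nat.lt_or_ge (firstGap S) a with h | h
  · exact absurd (h2 _ h) (firstGap_not_mem S)
  · omega

lemma range_subset_of_firstGap (S : Finset ℕ) : Finset.range (firstGap S) ⊆ S := by
  intro p hp
  simp only [Finset.mem_range] at hp
  exact firstGap_lt_mem S hp

lemma firstGap_le_card (S : Finset ℕ) : firstGap S ≤ S.card := by
  have := Finset.card_le_card (range_subset_of_firstGap S)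
  simpa using this

/-- fiber of Vk over firstGap = a is equinumerous with sparse sets -/
lemma fiber_card (n k a : ℕ) (hk : k ≤ n - 1) (ha : a ≤ k) :
    ((Vk n k).filter (fun S => firstGap S = a)).card = (Sp (n - a - 2) (k - a)).card := by
  refine Finset.card_bij'
    (fun S _ => (S.filter (fun x => a + 1 ≤ x)).image (fun x => x - (a+1)))
    (fun T _ => Finset.range a ∪ T.image (fun x => x + (a+1))) ?_ ?_ ?_ ?_
  · -- maps into Sp
    intro S hS
    simp only [Finset.mem_filter, mem_Vk] at hS
    obtain ⟨⟨hsub, hcond, hcard⟩, hfg⟩ := hS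
    have hanotin : a ∉ S := hfg ▸ firstGap_not_mem S
    have hlow : ∀ p < a, p ∈ S := fun p hp => firstGap_lt_mem S (by omega)
    rw [mem_Sp]
    have hinj : Set.InjOn (fun x => x - (a+1)) (S.filter (fun x => a + 1 ≤ x)) := by
      intro x hx y hy hxy
      simp only [Finset.coe_filter, Set.mem_setOf_eq] at hx hy
      simp only at hxy
      omega
    refine ⟨?_, ?_, ?_⟩
    · intro y hy
      simp only [Finset.mem_image, Finset.mem_filter] at hy
      obtain ⟨x, ⟨hxS, hax⟩, rfl⟩ := hy
      have := hsub hxS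
      simp only [Finset.mem_range] at this ⊢
      omega
    · intro y hy hy1
      simp only [Finset.mem_image, Finset.mem_filter] at hy hy1
      obtain ⟨x, ⟨hxS, hax⟩, rfl⟩ := hy
      obtain ⟨x', ⟨hx'S, hax'⟩, hx'⟩ := hy1
      have hx'x : x' = x + 1 := by omega
      subst hx'x
      -- x, x+1 ∈ S consecutive → a ∈ S, contradiction
      exact hanotin (cond_down hcond hxS hx'S a (by omega))
    · rw [Finset.card_image_of_injOn hinj]
      have : S.filter (fun x => a + 1 ≤ x) = S \ Finset.range a := by
        ext x
        simp only [Finset.mem_filter, Finset.mem_sdiff, Finset.mem_range]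
        constructor
        · rintro ⟨h1, h2⟩; exact ⟨h1, by omega⟩
        · rintro ⟨h1, h2⟩
          refine ⟨h1, ?_⟩
          rcases Nat.lt_or_ge x (a+1) with h | h
          · have : x = a := by omega
            exact absurd (this ▸ h1) hanotin
          · exact h
      have hsub2 : Finset.range a ⊆ S := by
        intro p hp
        simp only [Finset.mem_range] at hp
        exact hlow p hp
      rw [this, Finset.card_sdiff_of_subset hsub2, hcard, Finset.card_range]
  · -- maps back into fiber
    intro T hT
    rw [mem_Sp] at hT
    obtain ⟨hsub, hsp, hcard⟩ := hT
    have hdisj : Disjoint (Finset.range a) (T.image (fun x => x + (a+1))) := by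
      rw [Finset.disjoint_left]
      intro x hx hx'
      simp only [Finset.mem_range] at hx
      simp only [Finset.mem_image] at hx'
      obtain ⟨t, _, rfl⟩ := hx'
      omega
    have hmem : ∀ x, x ∈ Finset.range a ∪ T.image (fun x => x + (a+1)) ↔
        (x < a ∨ ∃ t ∈ T, t + (a+1) = x) := by
      intro x
      simp [Finset.mem_union, Finset.mem_range, Finset.mem_image]
    simp only [Finset.mem_filter, mem_Vk]
    refine ⟨⟨?_, ?_, ?_⟩, ?_⟩
    · intro x hx
      rw [hmem] at hx
      simp only [Finset.mem_range]
      rcases hx with h | ⟨t, ht, rfl⟩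
      · have : a ≤ k := ha
        omega
      · have := hsub ht
        simp only [Finset.mem_range] at this
        omega
    · intro i hi1 hi2
      rw [hmem] at hi1 hi2 ⊢
      rcases hi1 with h | ⟨t, ht, hteq⟩
      · left; omega
      · rcases hi2 with h' | ⟨t', ht', ht'eq⟩
        · omega
        · have : t' = t + 1 := by omega
          exact absurd (this ▸ ht') (hsp t ht)
    · rw [Finset.card_union_of_disjoint hdisj, Finset.card_range,
        Finset.card_image_of_injOn (by intro x _ y _ h; simpa using h), hcard]
      omega
    · apply firstGap_eq
      · rw [hmem]
        push_neg
        refine ⟨by omega, ?_⟩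
        intro t ht
        have := hsub ht
        omega
      · intro p hp
        rw [hmem]
        left; exact hp
  · -- left inverse
    intro S hS
    simp only [Finset.mem_filter, mem_Vk] at hS
    obtain ⟨⟨hsub, hcond, hcard⟩, hfg⟩ := hS
    have hanotin : a ∉ S := hfg ▸ firstGap_not_mem S
    have hlow : ∀ p < a, p ∈ S := fun p hp => firstGap_lt_mem S (by omega)
    ext x
    simp only [Finset.mem_union, Finset.mem_range, Finset.mem_image, Finset.mem_filter]
    constructor
    · rintro (h | ⟨y, ⟨z, ⟨hz, haz⟩, rfl⟩, rfl⟩)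
      · exact hlow x h
      · have : z - (a+1) + (a+1) = z := by omega
        rwa [this]
    · intro hx
      rcases Nat.lt_or_ge x a with h | h
      · left; exact h
      · right
        have hxa : x ≠ a := fun he => hanotin (he ▸ hx)
        refine ⟨x - (a+1), ⟨x, ⟨hx, by omega⟩, rfl⟩, by omega⟩
  · -- right inverse
    intro T hT
    rw [mem_Sp] at hT
    obtain ⟨hsub, hsp, hcard⟩ := hT
    ext y
    simp only [Finset.mem_image, Finset.mem_filter, Finset.mem_union, Finset.mem_range]
    constructor
    · rintro ⟨x, ⟨hx | ⟨t, ht, rfl⟩, hax⟩, rfl⟩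
      · omega
      · have : t + (a+1) - (a+1) = t := by omega
        rwa [this]
    · intro hy
      exact ⟨y + (a+1), ⟨Or.inr ⟨y, hy, rfl⟩, by omega⟩, by omega⟩

lemma Vk_card (n k : ℕ) (hn : 1 ≤ n) (hk : k ≤ n - 1) :
    (Vk n k).card = ∑ a ∈ Finset.range (k+1), Nat.choose (n - k - 1) (k - a) := by
  have hfib : ∀ S ∈ Vk n k, firstGap S ∈ Finset.range (k+1) := by
    intro S hS
    rw [mem_Vk] at hS
    simp only [Finset.mem_range]
    have := firstGap_le_card S
    omega
  rw [Finset.card_eq_sum_card_fiberwise hfib]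
  apply Finset.sum_congr rfl
  intro a ha
  simp only [Finset.mem_range] at ha
  rw [fiber_card n k a hk (by omega), Sp_card]
  rcases Nat.lt_or_ge a (n-1) with h | h
  · have he : n - a - 2 + 1 - (k - a) = n - k - 1 := by omega
    rw [he]
  · have h2 : k - a = 0 := by omega
    simp [h2]

lemma rhs_zero (n k : ℕ) (hk : n ≤ k) :
    ∑ ℓ ∈ Finset.Icc 1 n, _root_.C ((n : ℤ) - k - 1) ((k : ℤ) - ℓ + 1) = 0 := by
  apply Finset.sum_eq_zero
  intro ℓ hl
  simp only [Finset.mem_Icc] at hl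
  rw [_root_.C, if_neg]
  rintro ⟨h1, h2⟩
  omega

lemma rhs_eq (n k : ℕ) (hn : 1 ≤ n) (hk : k ≤ n - 1) :
    ∑ ℓ ∈ Finset.Icc 1 n, _root_.C ((n : ℤ) - k - 1) ((k : ℤ) - ℓ + 1)
      = ((∑ a ∈ Finset.range (k+1), Nat.choose (n - k - 1) (k - a) : ℕ) : ℤ) := by
  push_cast
  have hzero : ∀ ℓ ∈ Finset.Icc 1 n, ℓ ∉ Finset.Icc 1 (k+1) →
      _root_.C ((n : ℤ) - k - 1) ((k : ℤ) - ℓ + 1) = 0 := by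
    intro ℓ hl hnl
    simp only [Finset.mem_Icc] at hl hnl
    rw [_root_.C, if_neg]
    rintro ⟨h1, h2⟩
    omega
  rw [← Finset.sum_subset (Finset.Icc_subset_Icc_right (show k+1 ≤ n by omega)) hzero]
  rw [show Finset.Icc 1 (k+1) = Finset.map ⟨fun a => a + 1, add_left_injective 1⟩
      (Finset.range (k+1)) from ?_]
  · rw [Finset.sum_map]
    apply Finset.sum_congr rfl
    intro a ha
    simp only [Finset.mem_range] at ha
    simp only [Function.Embedding.coeFn_mk]
    rw [_root_.C]
    push_cast
    have hb : (k : ℤ) - (a + 1) + 1 = ((k - a : ℕ) : ℤ) := by push_cast; omega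
    rcases le_or_gt ((k : ℤ) - (a+1) + 1) ((n : ℤ) - k - 1) with h | h
    · rw [if_pos ⟨by omega, h⟩, hb]
      have e1 : ((n:ℤ) - k - 1).toNat = n - k - 1 := by omega
      rw [e1, Int.toNat_natCast]
    · rw [if_neg (by rintro ⟨h1, h2⟩; omega)]
      rw [Nat.choose_eq_zero_of_lt (by omega)]
      simp
  · ext x
    simp only [Finset.mem_Icc, Finset.mem_map, Finset.mem_range,
      Function.Embedding.coeFn_mk]
    constructor
    · rintro ⟨h1, h2⟩; exact ⟨x - 1, by omega, by omega⟩
    · rintro ⟨a, ha, rfl⟩; omega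

section PermStruct
variable {n : ℕ} (π : Equiv.Perm (Fin n))

/-- the bound property characterizing Av(312,321) -/
def Bnd : Prop := ∀ i : Fin n, (π i : ℕ) ≤ (i : ℕ) + 1

/-- positions with value < q -/
def Flt (n q : ℕ) : Finset (Fin n) := Finset.univ.filter (fun x : Fin n => (x:ℕ) < q)

lemma card_Flt (n q : ℕ) (h : q ≤ n) : (Flt n q).card = q := by
  have himg : (Flt n q).image Fin.val = Finset.range q := by
    ext a
    simp only [Flt, Finset.mem_image, Finset.mem_filter, Finset.mem_univ, true_and,
      Finset.mem_range]
    constructor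
    · rintro ⟨x, hx, rfl⟩; exact hx
    · intro ha; exact ⟨⟨a, by omega⟩, ha, rfl⟩
  rw [← Finset.card_image_of_injective (Flt n q) Fin.val_injective, himg, Finset.card_range]

lemma mem_Flt {n q : ℕ} {x : Fin n} : x ∈ Flt n q ↔ (x : ℕ) < q := by
  simp [Flt]

lemma image_Flt (hB : Bnd π) {j : Fin n} {q : ℕ} (h1 : (π j : ℕ) < q) (h2 : q ≤ (j : ℕ)) :
    (Flt n q).image π = (Flt n (q+1)).erase (π j) := by
  have hq : q ≤ n := le_trans h2 (le_of_lt j.isLt)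
  apply Finset.eq_of_subset_of_card_le
  · intro v hv
    simp only [Finset.mem_image] at hv
    obtain ⟨x, hx, rfl⟩ := hv
    rw [mem_Flt] at hx
    rw [Finset.mem_erase, mem_Flt]
    constructor
    · intro h
      have : x = j := π.injective h
      subst this
      omega
    · have := hB x
      omega
  · rw [Finset.card_erase_of_mem (by rw [mem_Flt]; omega),
      Finset.card_image_of_injective _ π.injective, card_Flt n q hq,
      card_Flt n (q+1) (by omega)]
    omega

/-- key structure lemma: left end of an inversion forces diagonal values -/
lemma step_eq (hB : Bnd π) {i j : Fin n} (hij : i < j) (hinv : π j < π i) :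
    ∀ p : Fin n, (i : ℕ) ≤ (p : ℕ) → (p : ℕ) < (j : ℕ) → (π p : ℕ) = (p : ℕ) + 1 := by
  intro p hip hpj
  have hv : (π j : ℕ) ≤ (i : ℕ) := by
    have h1 := hB i
    have h2 : (π j : ℕ) < (π i : ℕ) := hinv
    omega
  have himg := image_Flt π hB (j := j) (q := (p:ℕ)+1) (by omega) (by omega)
  have hpn : (p : ℕ) + 1 < n := by have := j.isLt; omega
  have hw : (⟨(p:ℕ)+1, hpn⟩ : Fin n) ∈ (Flt n ((p:ℕ)+1+1)).erase (π j) := by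
    rw [Finset.mem_erase, mem_Flt]
    constructor
    · intro h
      have : ((⟨(p:ℕ)+1, hpn⟩ : Fin n) : ℕ) = (π j : ℕ) := by rw [h]
      simp at this
      omega
    · simp
  rw [← himg, Finset.mem_image] at hw
  obtain ⟨x, hx, hxe⟩ := hw
  rw [mem_Flt] at hx
  have hxv : (π x : ℕ) = (p:ℕ)+1 := by rw [hxe]
  have hxb := hB x
  have hxp : x = p := by
    apply Fin.ext
    omega
  rw [← hxp, hxv]
  omega

lemma no_triple (hB : Bnd π) {a b c : Fin n} (hab : a < b) (hbc : b < c)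
    (h1 : π b < π a) (h2 : π c < π a) : False := by
  have := step_eq π hB (lt_trans hab hbc) h2 b (le_of_lt hab) hbc
  have hba := hB a
  have h1' : (π b : ℕ) < (π a : ℕ) := h1
  have hab' : (a:ℕ) < (b:ℕ) := hab
  omega

/-- the set of "diagonal+1" positions -/
def Aset : Finset ℕ :=
  (Finset.univ.filter (fun i : Fin n => (π i : ℕ) = (i : ℕ) + 1)).image Fin.val

lemma mem_Aset {m : ℕ} :
    m ∈ Aset π ↔ ∃ h : m < n, (π ⟨m, h⟩ : ℕ) = m + 1 := by
  simp only [Aset, Finset.mem_image, Finset.mem_filter, Finset.mem_univ, true_and]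
  constructor
  · rintro ⟨x, hx, rfl⟩; exact ⟨x.isLt, by convert hx⟩
  · rintro ⟨h, hm⟩; exact ⟨⟨m, h⟩, hm, rfl⟩

/-- counting inversions with fixed left endpoint -/
lemma inv_fiber_card (hB : Bnd π) (i : Fin n) :
    (Finset.univ.filter (fun j : Fin n => i < j ∧ π j < π i)).card
      = (if (π i : ℕ) = (i : ℕ) + 1 then 1 else 0) := by
  by_cases hA : (π i : ℕ) = (i : ℕ) + 1
  · rw [if_pos hA]
    set U := Finset.univ.filter (fun j : Fin n => π j < π i) with hU
    have hUcard : U.card = (i : ℕ) + 1 := by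
      have himg : U.image π = Flt n ((i:ℕ)+1) := by
        ext v
        simp only [hU, Finset.mem_image, Finset.mem_filter, Finset.mem_univ, true_and, mem_Flt]
        constructor
        · rintro ⟨x, hx, rfl⟩
          have : (π x : ℕ) < (π i : ℕ) := hx
          omega
        · intro hv
          refine ⟨π.symm v, ?_, by simp⟩
          have : π (π.symm v) = v := π.apply_symm_apply v
          rw [this]
          show (v:ℕ) < (π i:ℕ)
          omega
      rw [← Finset.card_image_of_injective U π.injective, himg, card_Flt]
      have := (π i).isLt
      omega
    have hsplit := Finset.card_filter_add_card_filter_not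
      (s := U) (p := fun j => i < j)
    have hneg : U.filter (fun j => ¬ i < j) = Flt n (i:ℕ) := by
      ext x
      simp only [hU, Finset.mem_filter, Finset.mem_univ, true_and, mem_Flt, not_lt]
      constructor
      · rintro ⟨h1, h2⟩
        have h1' : (π x : ℕ) < (π i : ℕ) := h1
        have h2' : (x : ℕ) ≤ (i : ℕ) := h2
        have : x ≠ i := by
          intro h; subst h; omega
        have : (x:ℕ) ≠ (i:ℕ) := fun h => this (Fin.ext h)
        omega
      · intro hx
        have hb := hB x
        constructor
        · show (π x : ℕ) < (π i : ℕ)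
          omega
        · show (x:ℕ) ≤ (i:ℕ)
          omega
    have hT : Finset.univ.filter (fun j : Fin n => i < j ∧ π j < π i)
        = U.filter (fun j => i < j) := by
      ext x
      simp only [hU, Finset.mem_filter, Finset.mem_univ, true_and]
      tauto
    rw [hT]
    rw [hneg] at hsplit
    rw [card_Flt n (i:ℕ) (le_of_lt i.isLt)] at hsplit
    omega
  · rw [if_neg hA]
    rw [Finset.card_eq_zero]
    rw [Finset.filter_eq_empty_iff]
    rintro j - ⟨hij, hinv⟩
    have := step_eq π hB hij hinv i (le_refl _) hij
    exact hA this

lemma invNum_eq_card_Aset (hB : Bnd π) : invNum π = (Aset π).card := by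
  rw [invNum]
  rw [Finset.card_eq_sum_card_fiberwise
    (f := fun p : Fin n × Fin n => p.1) (t := Finset.univ) (fun x _ => Finset.mem_univ _)]
  have hfib : ∀ i : Fin n,
      ((Finset.univ.filter (fun p : Fin n × Fin n => p.1 < p.2 ∧ π p.2 < π p.1)).filter
        (fun p => p.1 = i)).card
      = (Finset.univ.filter (fun j : Fin n => i < j ∧ π j < π i)).card := by
    intro i
    refine Finset.card_bij' (fun p _ => p.2) (fun j _ => (i, j)) ?_ ?_ ?_ ?_
    · rintro ⟨p1, p2⟩ hp
      simp only [Finset.mem_filter, Finset.mem_univ, true_and] at hp ⊢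
      obtain ⟨⟨h1, h2⟩, h3⟩ := hp
      subst h3
      exact ⟨h1, h2⟩
    · intro j hj
      simp only [Finset.mem_filter, Finset.mem_univ, true_and] at hj ⊢
      tauto
    · rintro ⟨p1, p2⟩ hp
      simp only [Finset.mem_filter, Finset.mem_univ, true_and] at hp
      have h : p1 = i := hp.2
      subst h
      rfl
    · intro j hj
      rfl
  rw [Finset.sum_congr rfl (fun i _ => hfib i)]
  rw [Finset.sum_congr rfl (fun i _ => inv_fiber_card π hB i)]
  rw [← Finset.sum_filter]
  simp only [Finset.sum_const, smul_eq_mul, mul_one]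
  rw [Aset, Finset.card_image_of_injective _ Fin.val_injective]

/-- determinism: a Bnd permutation is determined by its Aset -/
lemma perm_determined {π₁ π₂ : Equiv.Perm (Fin n)} (h1 : Bnd π₁) (h2 : Bnd π₂)
    (hA : ∀ i : Fin n, (π₁ i : ℕ) = (i:ℕ) + 1 ↔ (π₂ i : ℕ) = (i:ℕ) + 1) : π₁ = π₂ := by
  have key : ∀ m : ℕ, ∀ i : Fin n, (i : ℕ) = m → π₁ i = π₂ i := by
    intro m
    induction m using Nat.strong_induction_on with
    | _ m ih =>
    intro i him
    have hIH : ∀ q : Fin n, (q:ℕ) < (i:ℕ) → π₁ q = π₂ q := by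
      intro q hq
      exact ih (q:ℕ) (by omega) q rfl
    by_cases hcase : (π₁ i : ℕ) = (i:ℕ) + 1
    · have := (hA i).mp hcase
      apply Fin.ext
      omega
    · have hc2 : (π₂ i : ℕ) ≠ (i:ℕ) + 1 := fun h => hcase ((hA i).mpr h)
      have hb1 := h1 i
      have hb2 := h2 i
      -- both ≤ i; both in Flt (i+1) \ image over Flt i, which is a singleton
      have himgeq : (Flt n (i:ℕ)).image π₁ = (Flt n (i:ℕ)).image π₂ := by
        apply Finset.image_congr
        intro x hx
        simp only [Finset.coe_filter, Set.mem_setOf_eq, Flt] at hx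
        exact hIH x hx.2
      set D := (Flt n ((i:ℕ)+1)) \ (Flt n (i:ℕ)).image π₁ with hD
      have hmem : ∀ (σ : Equiv.Perm (Fin n)), Bnd σ → (σ i : ℕ) ≤ (i:ℕ) →
          (Flt n (i:ℕ)).image σ = (Flt n (i:ℕ)).image π₁ → σ i ∈ D := by
        intro σ hσ hle himg
        rw [hD, Finset.mem_sdiff, mem_Flt, ← himg]
        constructor
        · omega
        · rw [Finset.mem_image]
          rintro ⟨x, hx, hxe⟩
          rw [mem_Flt] at hx
          have : x = i := σ.injective hxe
          subst this
          omega
      have hDcard : D.card = 1 := by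
        rw [hD, Finset.card_sdiff_of_subset]
        · rw [Finset.card_image_of_injective _ π₁.injective,
            card_Flt n _ (by omega), card_Flt n _ (le_of_lt i.isLt)]
          omega
        · intro v hv
          rw [Finset.mem_image] at hv
          obtain ⟨x, hx, rfl⟩ := hv
          rw [mem_Flt] at hx ⊢
          have := h1 x
          omega
      rw [Finset.card_eq_one] at hDcard
      obtain ⟨u, hu⟩ := hDcard
      have m1 := hmem π₁ h1 (by omega) rfl
      have m2 := hmem π₂ h2 (by omega) himgeq.symm
      rw [hu, Finset.mem_singleton] at m1 m2
      rw [m1, m2]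
  apply Equiv.ext
  intro i
  exact key (i:ℕ) i rfl

end PermStruct

section Patterns
variable {n : ℕ} (π : Equiv.Perm (Fin n))

lemma contains312_of {a b c : Fin n} (hab : a < b) (hbc : b < c)
    (h1 : π b < π c) (h2 : π c < π a) : ContainsPat π [3,1,2] := by
  refine ⟨![a,b,c], ?_, ?_⟩
  · intro x y hxy
    fin_cases x <;> fin_cases y <;>
      simp_all [Matrix.cons_val_zero, Matrix.cons_val_one, Matrix.cons_val_two] <;>
      first
        | exact hab | exact hbc | exact lt_trans hab hbc
        | exact absurd hxy (by decide)
  · intro x y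
    have h3 : π b < π a := lt_trans h1 h2
    fin_cases x <;> fin_cases y <;>
      simp [Matrix.cons_val_zero, Matrix.cons_val_one, Matrix.cons_val_two] <;>
      first
        | exact h1 | exact h2 | exact h3
        | exact h1.le | exact h2.le | exact h3.le
        | exact le_refl _ | exact lt_irrefl _

lemma contains321_of {a b c : Fin n} (hab : a < b) (hbc : b < c)
    (h1 : π b < π a) (h2 : π c < π b) : ContainsPat π [3,2,1] := by
  refine ⟨![a,b,c], ?_, ?_⟩
  · intro x y hxy
    fin_cases x <;> fin_cases y <;>
      simp_all [Matrix.cons_val_zero, Matrix.cons_val_one, Matrix.cons_val_two] <;>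
      first
        | exact hab | exact hbc | exact lt_trans hab hbc
        | exact absurd hxy (by decide)
  · intro x y
    have h3 : π c < π a := lt_trans h2 h1
    fin_cases x <;> fin_cases y <;>
      simp [Matrix.cons_val_zero, Matrix.cons_val_one, Matrix.cons_val_two] <;>
      first
        | exact h1 | exact h2 | exact h3
        | exact h1.le | exact h2.le | exact h3.le
        | exact le_refl _ | exact lt_irrefl _

/-- from a 312 or 321 containment get a "one value above two later smaller" triple;
conversely here we need: triple exists → one of the two patterns occurs -/
lemma patterns_of_triple {a b c : Fin n} (hab : a < b) (hbc : b < c)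
    (h1 : π b < π a) (h2 : π c < π a) :
    ContainsPat π [3,1,2] ∨ ContainsPat π [3,2,1] := by
  have hne : π b ≠ π c := fun h => absurd (π.injective h) (ne_of_lt hbc)
  rcases lt_or_gt_of_ne hne with h | h
  · exact Or.inl (contains312_of π hab hbc h h2)
  · exact Or.inr (contains321_of π hab hbc h1 h)

/-- destructor for 312 -/
lemma triple_of_312 (h : ContainsPat π [3,1,2]) :
    ∃ a b c : Fin n, a < b ∧ b < c ∧ π b < π a ∧ π c < π a := by
  obtain ⟨f, hm, hiff⟩ := h
  refine ⟨f ⟨0, by decide⟩, f ⟨1, by decide⟩, f ⟨2, by decide⟩,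
    hm (by decide), hm (by decide), ?_, ?_⟩
  · exact (hiff ⟨1, by decide⟩ ⟨0, by decide⟩).mp (by decide)
  · exact (hiff ⟨2, by decide⟩ ⟨0, by decide⟩).mp (by decide)

lemma triple_of_321 (h : ContainsPat π [3,2,1]) :
    ∃ a b c : Fin n, a < b ∧ b < c ∧ π b < π a ∧ π c < π a := by
  obtain ⟨f, hm, hiff⟩ := h
  refine ⟨f ⟨0, by decide⟩, f ⟨1, by decide⟩, f ⟨2, by decide⟩,
    hm (by decide), hm (by decide), ?_, ?_⟩
  · exact (hiff ⟨1, by decide⟩ ⟨0, by decide⟩).mp (by decide)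
  · exact (hiff ⟨2, by decide⟩ ⟨0, by decide⟩).mp (by decide)

/-- Avoiding 312 and 321 gives the bound -/
lemma bnd_of_avoids (h312 : ¬ ContainsPat π [3,1,2]) (h321 : ¬ ContainsPat π [3,2,1]) :
    Bnd π := by
  intro i
  by_contra hc
  push_neg at hc
  -- π i ≥ i + 2
  set U := Finset.univ.filter (fun j : Fin n => π j < π i) with hU
  have hUcard : U.card = (π i : ℕ) := by
    have himg : U.image π = Flt n ((π i : ℕ)) := by
      ext v
      simp only [hU, Finset.mem_image, Finset.mem_filter, Finset.mem_univ, true_and, mem_Flt]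
      constructor
      · rintro ⟨x, hx, rfl⟩; exact hx
      · intro hv
        refine ⟨π.symm v, ?_, π.apply_symm_apply v⟩
        show (π (π.symm v)) < π i
        rw [π.apply_symm_apply]
        exact hv
    rw [← Finset.card_image_of_injective U π.injective, himg,
      card_Flt n _ (le_of_lt (π i).isLt)]
  have hsplit := Finset.card_filter_add_card_filter_not (s := U) (p := fun j => i < j)
  have hneg : (U.filter (fun j => ¬ i < j)).card ≤ (i : ℕ) := by
    have hsub : U.filter (fun j => ¬ i < j) ⊆ Flt n (i:ℕ) := by
      intro x hx
      simp only [hU, Finset.mem_filter, Finset.mem_univ, true_and, not_lt] at hx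
      rw [mem_Flt]
      obtain ⟨h1, h2⟩ := hx
      have : x ≠ i := by intro h; subst h; exact lt_irrefl _ h1
      have : (x:ℕ) ≠ (i:ℕ) := fun h => this (Fin.ext h)
      have : (x:ℕ) ≤ (i:ℕ) := h2
      omega
    calc (U.filter (fun j => ¬ i < j)).card ≤ (Flt n (i:ℕ)).card := Finset.card_le_card hsub
      _ = (i:ℕ) := card_Flt n _ (le_of_lt i.isLt)
  have hTcard : 1 < (U.filter (fun j => i < j)).card := by omega
  obtain ⟨a, ha, b, hb, hne⟩ := Finset.one_lt_card.mp hTcard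
  simp only [hU, Finset.mem_filter, Finset.mem_univ, true_and] at ha hb
  obtain ⟨ha1, ha2⟩ := ha
  obtain ⟨hb1, hb2⟩ := hb
  rcases lt_or_gt_of_ne hne with h | h
  · rcases patterns_of_triple π ha2 h ha1 hb1 with hP | hP
    · exact h312 hP
    · exact h321 hP
  · rcases patterns_of_triple π hb2 h hb1 ha1 with hP | hP
    · exact h312 hP
    · exact h321 hP

end Patterns

section Patterns2
variable {n : ℕ} (π : Equiv.Perm (Fin n))

/-- the run condition -/
def RC : Prop := ∀ i j l : Fin n, (j:ℕ) = (i:ℕ)+1 → (l:ℕ) = (i:ℕ)+2 →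
  (π j : ℕ) = (i:ℕ)+2 → (π l : ℕ) = (i:ℕ)+3 → (π i : ℕ) = (i:ℕ)+1

lemma contains1342_of {a b c d : Fin n} (hab : a < b) (hbc : b < c) (hcd : c < d)
    (h1 : π a < π d) (h2 : π d < π b) (h3 : π b < π c) : ContainsPat π [1,3,4,2] := by
  refine ⟨![a,b,c,d], ?_, ?_⟩
  · intro x y hxy
    fin_cases x <;> fin_cases y <;>
      simp_all <;>
      first
        | exact hab | exact hbc | exact hcd
        | exact lt_trans hab hbc | exact lt_trans hbc hcd
        | exact lt_trans hab (lt_trans hbc hcd)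
        | exact absurd hxy (by decide)
  · intro x y
    have h4 : π a < π b := lt_trans h1 h2
    have h5 : π a < π c := lt_trans h4 h3
    have h6 : π d < π c := lt_trans h2 h3
    fin_cases x <;> fin_cases y <;>
      (first
        | (refine iff_of_true (by decide) ?_)
        | (refine iff_of_false (by decide) ?_)) <;>
      first
        | exact h1 | exact h2 | exact h3 | exact h4 | exact h5 | exact h6
        | exact lt_irrefl _
        | exact lt_asymm h1 | exact lt_asymm h2 | exact lt_asymm h3
        | exact lt_asymm h4 | exact lt_asymm h5 | exact lt_asymm h6

lemma quad_of_1342 (h : ContainsPat π [1,3,4,2]) :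
    ∃ a b c d : Fin n, a < b ∧ b < c ∧ c < d ∧ π a < π d ∧ π d < π b ∧ π b < π c := by
  obtain ⟨f, hm, hiff⟩ := h
  refine ⟨f ⟨0, by decide⟩, f ⟨1, by decide⟩, f ⟨2, by decide⟩, f ⟨3, by decide⟩,
    hm (by decide), hm (by decide), hm (by decide), ?_, ?_, ?_⟩
  · exact (hiff ⟨0, by decide⟩ ⟨3, by decide⟩).mp (by decide)
  · exact (hiff ⟨3, by decide⟩ ⟨1, by decide⟩).mp (by decide)
  · exact (hiff ⟨1, by decide⟩ ⟨2, by decide⟩).mp (by decide)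

lemma no1342 (hB : Bnd π) (hRC : RC π) : ¬ ContainsPat π [1,3,4,2] := by
  intro h
  obtain ⟨a, b, c, d, hab, hbc, hcd, h1, h2, h3⟩ := quad_of_1342 π h
  have hbd : b < d := lt_trans hbc hcd
  have hstep := step_eq π hB hbd h2
  have hbn : (b:ℕ) < n := b.isLt
  have hdn : (d:ℕ) < n := d.isLt
  have hbcn : (b:ℕ) < (c:ℕ) := hbc
  have hcdn : (c:ℕ) < (d:ℕ) := hcd
  have hπb : (π b : ℕ) = (b:ℕ)+1 := hstep b (le_refl _) hbd
  have hb1n : (b:ℕ)+1 < n := by omega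
  have hπb1 : (π ⟨(b:ℕ)+1, hb1n⟩ : ℕ) = (b:ℕ)+2 := by
    have := hstep ⟨(b:ℕ)+1, hb1n⟩ (by simp) (by simp; omega)
    simpa using this
  -- find the maximal position below b that is off-diagonal
  set F := Finset.univ.filter (fun p : Fin n => (p:ℕ) < (b:ℕ) ∧ (π p:ℕ) ≠ (p:ℕ)+1) with hF
  have hFne : F.Nonempty := by
    rw [Finset.filter_nonempty_iff]
    by_contra hall
    push_neg at hall
    have hall' : ∀ p : Fin n, (p:ℕ) < (b:ℕ) → (π p:ℕ) = (p:ℕ)+1 :=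
      fun p hp => hall p (Finset.mem_univ p) hp
    have hv : (π d : ℕ) ≤ (b:ℕ) := by
      have : (π d : ℕ) < (π b : ℕ) := h2
      omega
    have hv1 : 1 ≤ (π d : ℕ) := by
      by_contra h0
      push_neg at h0
      have : (π a : ℕ) < (π d : ℕ) := h1
      omega
    -- position of value π d would be (π d) - 1 < b, contradiction
    have hx : ((π d : ℕ) - 1) < n := by omega
    have hval := hall' ⟨(π d:ℕ)-1, hx⟩ (by simp; omega)
    have hfx : π (⟨(π d:ℕ)-1, hx⟩ : Fin n) = π d := by
      apply Fin.ext
      show (π _ : ℕ) = (π d : ℕ)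
      rw [hval]
      show (π d:ℕ) - 1 + 1 = (π d:ℕ)
      omega
    have hinj := π.injective hfx
    have hvv : ((π d:ℕ) - 1) = (d:ℕ) := congrArg Fin.val hinj
    have hbd' : (b:ℕ) < (d:ℕ) := hbd
    omega
  set i := F.max' hFne with hi
  have hiF : i ∈ F := F.max'_mem hFne
  rw [hF, Finset.mem_filter] at hiF
  obtain ⟨-, hib, hioff⟩ := hiF
  have hmax : ∀ q : Fin n, q ∈ F → q ≤ i := fun q hq => F.le_max' q hq
  have hdiag : ∀ q : Fin n, (i:ℕ) < (q:ℕ) → (q:ℕ) < (b:ℕ) → (π q : ℕ) = (q:ℕ)+1 := by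
    intro q hq1 hq2
    by_contra hc
    have : q ∈ F := by
      rw [hF, Finset.mem_filter]
      exact ⟨Finset.mem_univ q, hq2, hc⟩
    have := hmax q this
    have : (q:ℕ) ≤ (i:ℕ) := this
    omega
  have hi1n : (i:ℕ)+1 < n := by omega
  have hi2n : (i:ℕ)+2 < n := by omega
  have hπi1 : (π ⟨(i:ℕ)+1, hi1n⟩ : ℕ) = (i:ℕ)+2 := by
    rcases Nat.lt_or_ge ((i:ℕ)+1) (b:ℕ) with h | h
    · exact hdiag ⟨(i:ℕ)+1, hi1n⟩ (by simp) (by simpa using h)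
    · have hib' : (i:ℕ)+1 = (b:ℕ) := by omega
      have : (⟨(i:ℕ)+1, hi1n⟩ : Fin n) = b := Fin.ext (by simpa using hib')
      rw [this, hπb]
      omega
  have hπi2 : (π ⟨(i:ℕ)+2, hi2n⟩ : ℕ) = (i:ℕ)+3 := by
    rcases Nat.lt_or_ge ((i:ℕ)+2) (b:ℕ) with h | h
    · exact hdiag ⟨(i:ℕ)+2, hi2n⟩ (by simp) (by simpa using h)
    · rcases Nat.lt_or_ge ((i:ℕ)+2) ((b:ℕ)+1) with h' | h'
      · have hib' : (i:ℕ)+2 = (b:ℕ) := by omega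
        have : (⟨(i:ℕ)+2, hi2n⟩ : Fin n) = b := Fin.ext (by simpa using hib')
        rw [this, hπb]
        omega
      · have hib' : (i:ℕ)+2 = (b:ℕ)+1 := by omega
        have : (⟨(i:ℕ)+2, hi2n⟩ : Fin n) = ⟨(b:ℕ)+1, hb1n⟩ := Fin.ext (by simpa using hib')
        rw [this, hπb1]
        omega
  have := hRC i ⟨(i:ℕ)+1, hi1n⟩ ⟨(i:ℕ)+2, hi2n⟩ (by simp) (by simp) hπi1 hπi2
  exact hioff this

lemma rc_of (hB : Bnd π) (h1342 : ¬ ContainsPat π [1,3,4,2]) : RC π := by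
  intro i j l hj hl hπj hπl
  by_contra hne
  have hπile : (π i : ℕ) ≤ (i:ℕ) := by
    have := hB i
    omega
  have hi2n : (i:ℕ)+2 < n := by rw [← hl]; exact l.isLt
  set I := (Flt n ((i:ℕ)+1)).image π with hI
  by_cases h0 : ∃ p : Fin n, (p:ℕ) ≤ (i:ℕ) ∧ (π p : ℕ) = 0
  · obtain ⟨p1, hp1i, hp1v⟩ := h0
    -- find missing value w
    have hIsub : I ⊆ Flt n ((i:ℕ)+2) := by
      intro v hv
      rw [hI, Finset.mem_image] at hv
      obtain ⟨x, hx, rfl⟩ := hv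
      rw [mem_Flt] at hx ⊢
      have := hB x
      omega
    have hIcard : I.card = (i:ℕ)+1 := by
      rw [hI, Finset.card_image_of_injective _ π.injective, card_Flt n _ (by omega)]
    have hex : ∃ w : Fin n, w ∈ Flt n ((i:ℕ)+2) ∧ w ∉ I := by
      have hcard2 : (Flt n ((i:ℕ)+2)).card = (i:ℕ)+2 := card_Flt n _ (by omega)
      by_contra hno
      push_neg at hno
      have hsub2 : Flt n ((i:ℕ)+2) ⊆ I := fun w hw => hno w hw
      have := Finset.card_le_card hsub2
      omega
    obtain ⟨w, hwF, hwI⟩ := hex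
    rw [mem_Flt] at hwF
    have hw0 : (w:ℕ) ≠ 0 := by
      intro h0'
      apply hwI
      rw [hI, Finset.mem_image]
      refine ⟨p1, by rw [mem_Flt]; omega, ?_⟩
      apply Fin.ext
      rw [hp1v, h0']
    set dpos := π.symm w with hd
    have hπd : π dpos = w := π.apply_symm_apply w
    have hdI : (i:ℕ)+1 ≤ (dpos:ℕ) := by
      by_contra hlt
      push_neg at hlt
      apply hwI
      rw [hI, Finset.mem_image]
      exact ⟨dpos, by rw [mem_Flt]; omega, hπd⟩
    have hπdval : (π dpos : ℕ) = (w:ℕ) := congrArg Fin.val hπd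
    have hdj : (dpos:ℕ) ≠ (j:ℕ) := by
      intro he
      have : dpos = j := Fin.ext he
      rw [this] at hπdval
      omega
    have hdl : (dpos:ℕ) ≠ (l:ℕ) := by
      intro he
      have : dpos = l := Fin.ext he
      rw [this] at hπdval
      omega
    apply h1342
    have hp1v' : (π p1 : ℕ) = 0 := hp1v
    refine contains1342_of π (a := p1) (b := j) (c := l) (d := dpos)
      (Fin.lt_def.mpr (by omega)) (Fin.lt_def.mpr (by omega)) (Fin.lt_def.mpr (by omega))
      (Fin.lt_def.mpr (by omega)) (Fin.lt_def.mpr (by omega)) (Fin.lt_def.mpr (by omega))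
  · -- no zero among early values: the permutation is diagonal up to i, contradiction
    push_neg at h0
    have key : ∀ m : ℕ, ∀ p : Fin n, (p:ℕ) = m → (p:ℕ) ≤ (i:ℕ) → (π p : ℕ) = (p:ℕ)+1 := by
      intro m
      induction m using Nat.strong_induction_on with
      | _ m ih =>
      intro p hpm hpi
      by_contra hc
      have hple : (π p : ℕ) ≤ (p:ℕ) := by
        have := hB p
        omega
      have hp0 : 1 ≤ (π p : ℕ) := by
        have := h0 p hpi
        omega
      have hq : ((π p:ℕ) - 1) < n := by have := p.isLt; omega
      have hqp : ((π p:ℕ) - 1) < (p:ℕ) := by omega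
      have hqv := ih ((π p:ℕ)-1) (by omega) ⟨(π p:ℕ)-1, hq⟩ rfl (by simp; omega)
      have hfx : π (⟨(π p:ℕ)-1, hq⟩ : Fin n) = π p := by
        apply Fin.ext
        show (π _ : ℕ) = (π p : ℕ)
        rw [hqv]
        show (π p:ℕ) - 1 + 1 = (π p:ℕ)
        omega
      have hinj := π.injective hfx
      have hvv : ((π p:ℕ) - 1) = (p:ℕ) := congrArg Fin.val hinj
      omega
    exact hne (key (i:ℕ) i rfl (le_refl _))

end Patterns2

section Char
variable {n : ℕ} (π : Equiv.Perm (Fin n))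

lemma avoids_iff :
    AvoidsAll π [[3,1,2],[3,2,1],[1,3,4,2]] ↔ Bnd π ∧ RC π := by
  constructor
  · intro hA
    have h312 : ¬ ContainsPat π [3,1,2] := hA _ (by simp)
    have h321 : ¬ ContainsPat π [3,2,1] := hA _ (by simp)
    have h1342 : ¬ ContainsPat π [1,3,4,2] := hA _ (by simp)
    have hB := bnd_of_avoids π h312 h321
    exact ⟨hB, rc_of π hB h1342⟩
  · rintro ⟨hB, hRC⟩
    intro p hp
    simp only [List.mem_cons, List.not_mem_nil, or_false] at hp
    rcases hp with rfl | rfl | rfl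
    · intro hC
      obtain ⟨a, b, c, hab, hbc, h1, h2⟩ := triple_of_312 π hC
      exact no_triple π hB hab hbc h1 h2
    · intro hC
      obtain ⟨a, b, c, hab, hbc, h1, h2⟩ := triple_of_321 π hC
      exact no_triple π hB hab hbc h1 h2
    · exact no1342 π hB hRC

end Char

section Construction
variable (S : Finset ℕ)

/-- length of the run of S ending just below i -/
def runlen : ℕ → ℕ
  | 0 => 0
  | (i+1) => if i ∈ S then runlen i + 1 else 0

lemma runlen_le : ∀ i, runlen S i ≤ i := by
  intro i
  induction i with
  | zero => simp [runlen]
  | succ i ih =>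
    rw [runlen]
    split <;> omega

lemma runlen_mem : ∀ i p, i - runlen S i ≤ p → p < i → p ∈ S := by
  intro i
  induction i with
  | zero => intro p _ h; omega
  | succ i ih =>
    intro p hp1 hp2
    rw [runlen] at hp1
    by_cases hi : i ∈ S
    · rw [if_pos hi] at hp1
      rcases Nat.lt_or_ge p i with h | h
      · exact ih p (by have := runlen_le S i; omega) h
      · have : p = i := by omega
        exact this ▸ hi
    · rw [if_neg hi] at hp1
      omega

lemma runlen_start : ∀ i, i - runlen S i = 0 ∨ (i - runlen S i) - 1 ∉ S := by
  intro i
  induction i with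
  | zero => left; rfl
  | succ i ih =>
    by_cases hi : i ∈ S
    · have : runlen S (i+1) = runlen S i + 1 := by rw [runlen, if_pos hi]
      rw [this]
      have e : i + 1 - (runlen S i + 1) = i - runlen S i := by omega
      rw [e]
      exact ih
    · have : runlen S (i+1) = 0 := by rw [runlen, if_neg hi]
      rw [this]
      right
      simpa using hi

/-- the underlying map of the permutation associated with S -/
def gmap (i : ℕ) : ℕ := if i ∈ S then i + 1 else i - runlen S i

lemma gmap_le (i : ℕ) : gmap S i ≤ i + 1 := by
  rw [gmap]
  split
  · omega
  · have := runlen_le S i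
    omega

lemma gmap_inj : Function.Injective (gmap S) := by
  have key : ∀ i j, i < j → gmap S i = gmap S j → False := by
    intro i j hij he
    rw [gmap, gmap] at he
    by_cases hi : i ∈ S <;> by_cases hj : j ∈ S
    · rw [if_pos hi, if_pos hj] at he; omega
    · rw [if_pos hi, if_neg hj] at he
      -- i+1 = j - runlen S j, so i = (j - runlen S j) - 1 ∉ S unless start 0
      rcases runlen_start S j with h | h
      · omega
      · apply h
        have hieq : i = (j - runlen S j) - 1 := by omega
        rw [← hieq]
        exact hi
    · rw [if_neg hi, if_pos hj] at he
      have := runlen_le S i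
      omega
    · rw [if_neg hi, if_neg hj] at he
      have h1 := runlen_le S i
      have h2 := runlen_le S j
      have : j - runlen S j ≤ i := by omega
      exact hi (runlen_mem S j i (by omega) hij)
  intro i j he
  rcases lt_trichotomy i j with h | h | h
  · exact absurd (key i j h he) (by simp)
  · exact h
  · exact absurd (key j i h he.symm) (by simp)

end Construction

/-- the permutation associated with a subset of range (n-1) -/
noncomputable def permOf (n : ℕ) (S : Finset ℕ) (hS : S ⊆ Finset.range (n-1)) :
    Equiv.Perm (Fin n) := by
  have hlt : ∀ i : Fin n, gmap S (i : ℕ) < n := by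
    intro i
    rw [gmap]
    split
    · next h =>
      have := hS h
      simp only [Finset.mem_range] at this
      omega
    · have := runlen_le S (i:ℕ)
      have := i.isLt
      omega
  exact Equiv.ofBijective (fun i => ⟨gmap S (i:ℕ), hlt i⟩)
    (Finite.injective_iff_bijective.mp (by
      intro a b hab
      apply Fin.ext
      apply gmap_inj S
      have : gmap S (a:ℕ) = gmap S (b:ℕ) := congrArg Fin.val hab
      exact this))

lemma permOf_val (n : ℕ) (S : Finset ℕ) (hS : S ⊆ Finset.range (n-1)) (i : Fin n) :
    ((permOf n S hS) i : ℕ) = gmap S (i : ℕ) := rfl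

lemma permOf_bnd (n : ℕ) (S : Finset ℕ) (hS : S ⊆ Finset.range (n-1)) :
    Bnd (permOf n S hS) := by
  intro i
  rw [permOf_val]
  exact gmap_le S _

lemma permOf_diag (n : ℕ) (S : Finset ℕ) (hS : S ⊆ Finset.range (n-1)) (i : Fin n) :
    ((permOf n S hS) i : ℕ) = (i:ℕ) + 1 ↔ (i:ℕ) ∈ S := by
  rw [permOf_val, gmap]
  split
  · next h => simp [h]
  · next h =>
    have := runlen_le S (i:ℕ)
    constructor
    · intro he; omega
    · intro he; exact absurd he h

section Assembly
variable {n : ℕ}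

lemma mem_Aset_fin (π : Equiv.Perm (Fin n)) (i : Fin n) :
    (i:ℕ) ∈ Aset π ↔ (π i : ℕ) = (i:ℕ)+1 := by
  rw [mem_Aset]
  constructor
  · rintro ⟨h, he⟩
    rwa [Fin.eta] at he
  · intro he
    exact ⟨i.isLt, by rwa [Fin.eta]⟩

lemma Aset_permOf (S : Finset ℕ) (hS : S ⊆ Finset.range (n-1)) :
    Aset (permOf n S hS) = S := by
  ext m
  rw [mem_Aset]
  constructor
  · rintro ⟨h, he⟩
    rwa [permOf_diag] at he
  · intro hm
    have hmr := hS hm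
    simp only [Finset.mem_range] at hmr
    have hmn : m < n := by omega
    exact ⟨hmn, (permOf_diag n S hS ⟨m, hmn⟩).mpr hm⟩

lemma RC_permOf (S : Finset ℕ) (hS : S ⊆ Finset.range (n-1))
    (hcond : ∀ i : ℕ, i + 1 ∈ S → i + 2 ∈ S → i ∈ S) : RC (permOf n S hS) := by
  intro i j l hj hl hπj hπl
  have hjS : (j:ℕ) ∈ S := by
    rw [← permOf_diag n S hS j]
    omega
  have hlS : (l:ℕ) ∈ S := by
    rw [← permOf_diag n S hS l]
    omega
  rw [hj] at hjS
  rw [hl] at hlS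
  have hiS : (i:ℕ) ∈ S := hcond (i:ℕ) hjS hlS
  exact (permOf_diag n S hS i).mpr hiS

lemma main_card (n k : ℕ) :
    (Finset.univ.filter (fun π : Equiv.Perm (Fin n) =>
        AvoidsAll π [[3,1,2],[3,2,1],[1,3,4,2]] ∧ invNum π = k)).card = (Vk n k).card := by
  apply Finset.card_bij (fun π _ => Aset π)
  · intro π hπ
    simp only [Finset.mem_filter, Finset.mem_univ, true_and] at hπ
    obtain ⟨hAv, hinv⟩ := hπ
    obtain ⟨hB, hRC⟩ := (avoids_iff π).mp hAv
    rw [mem_Vk]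
    refine ⟨?_, ?_, ?_⟩
    · intro m hm
      rw [mem_Aset] at hm
      obtain ⟨h, he⟩ := hm
      have := (π ⟨m, h⟩).isLt
      simp only [Finset.mem_range]
      omega
    · intro i h1 h2
      rw [mem_Aset] at h1 h2
      obtain ⟨hi1, he1⟩ := h1
      obtain ⟨hi2, he2⟩ := h2
      have hin : i < n := by omega
      have := hRC ⟨i, hin⟩ ⟨i+1, hi1⟩ ⟨i+2, hi2⟩ rfl rfl (by simpa using he1)
        (by simpa using he2)
      rw [mem_Aset]
      exact ⟨hin, by simpa using this⟩
    · rw [← invNum_eq_card_Aset π hB, hinv]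
  · intro π₁ h1 π₂ h2 he
    simp only [Finset.mem_filter, Finset.mem_univ, true_and] at h1 h2
    obtain ⟨hB1, -⟩ := (avoids_iff π₁).mp h1.1
    obtain ⟨hB2, -⟩ := (avoids_iff π₂).mp h2.1
    apply perm_determined hB1 hB2
    intro i
    rw [← mem_Aset_fin π₁ i, ← mem_Aset_fin π₂ i, he]
  · intro S hS
    rw [mem_Vk] at hS
    obtain ⟨hsub, hcond, hcard⟩ := hS
    refine ⟨permOf n S hsub, ?_, Aset_permOf S hsub⟩
    simp only [Finset.mem_filter, Finset.mem_univ, true_and]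
    constructor
    · exact (avoids_iff _).mpr ⟨permOf_bnd n S hsub, RC_permOf S hsub hcond⟩
    · rw [invNum_eq_card_Aset _ (permOf_bnd n S hsub), Aset_permOf S hsub, hcard]

end Assembly

theorem stmt12 (n k : ℕ) (hn : 1 ≤ n) :
    ({π : Equiv.Perm (Fin n) | AvoidsAll π [[3,1,2],[3,2,1],[1,3,4,2]] ∧ invNum π = k}.ncard : ℤ) =
      ∑ ℓ ∈ Finset.Icc 1 n, C ((n : ℤ) - k - 1) ((k : ℤ) - ℓ + 1) := by
  have hset : {π : Equiv.Perm (Fin n) | AvoidsAll π [[3,1,2],[3,2,1],[1,3,4,2]] ∧ invNum π = k}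
      = ↑(Finset.univ.filter (fun π : Equiv.Perm (Fin n) =>
          AvoidsAll π [[3,1,2],[3,2,1],[1,3,4,2]] ∧ invNum π = k)) := by
    ext π
    simp
  rw [hset, Set.ncard_coe_finset, main_card]
  rcases le_or_gt k (n-1) with hk | hk
  · rw [Vk_card n k hn hk, rhs_eq n k hn hk]
  · have hVk : Vk n k = ∅ := by
      ext S
      rw [mem_Vk]
      simp only [Finset.notMem_empty, iff_false]
      rintro ⟨hsub, -, hcard⟩
      have := Finset.card_le_card hsub
      simp only [Finset.card_range] at this
      omega
    rw [hVk, rhs_zero n k (by omega)]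
    simp
end
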